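/- arXiv:2003.13777 — 7 statements merged into one kernel-verified Lean document; each statement's English description precedes it below -/
import Mathlib

section
/- For every tree T, every family of pairwise independent (≤2)-separations of T has size at most β(T). -/
open SimpleGraph

/-- `(A, B)` is a `k`-separation of `H`: edge-disjoint subgraphs whose union is `H`,
with `V(A) \ V(B)` and `V(B) \ V(A)` nonempty and `|V(A) ∩ V(B)| = k`. -/
def IsSeparation {V : Type*} (H : SimpleGraph V) (A B : H.Subgraph) (k : ℕ) : Prop :=
  Disjoint A.edgeSet B.edgeSet ∧ A ⊔ B = ⊤ ∧
    (A.verts \ B.verts).Nonempty ∧ (B.verts \ A.verts).Nonempty ∧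
    (A.verts ∩ B.verts).ncard = k

/-- `(A, B)` is a `(≤2)`-separation of `H`. -/
def IsSepLE2 {V : Type*} (H : SimpleGraph V) (A B : H.Subgraph) : Prop :=
  ∃ k ≤ 2, IsSeparation H A B k

/-- The edge set of `A⁻`: the edges of `A` except those joining two vertices
of `V(A) ∩ V(B)`. -/
def sepMinusEdges {V : Type*} {H : SimpleGraph V} (A B : H.Subgraph) : Set (Sym2 V) :=
  {e | e ∈ A.edgeSet ∧ ¬ ∀ v ∈ e, v ∈ A.verts ∩ B.verts}

/-- Separations `(A,B)` and `(C,D)` are independent. -/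
def IndepSeps {V : Type*} {H : SimpleGraph V} (A B C D : H.Subgraph) : Prop :=
  sepMinusEdges A B ∩ sepMinusEdges C D = ∅ ∧
    (A.verts \ B.verts) ∩ (C.verts \ D.verts) = ∅

/-- `β(T)`: the maximum size of a stable set in the subgraph of `T` induced by the
vertices of degree at most 2. -/
noncomputable def beta {V : Type*} (T : SimpleGraph V) : ℕ :=
  sSup {n | ∃ S : Set V, S.ncard = n ∧ (∀ v ∈ S, (T.neighborSet v).ncard ≤ 2) ∧
    (∀ u ∈ S, ∀ w ∈ S, ¬ T.Adj u w)}

section Aux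

variable {V : Type*} {T : SimpleGraph V}

/-- A geodesic between reachable vertices. -/
lemma exists_geodesic (h : T.Reachable r u) :
    ∃ p : T.Walk r u, p.IsPath ∧ p.length = T.dist r u :=
  h.exists_path_of_dist

/-- In a tree, adjacent vertices are at different distances from any root. -/
lemma tree_adj_dist_ne (hT : T.IsTree) (r : V) {u w : V} (hadj : T.Adj u w) :
    T.dist r u ≠ T.dist r w := by
  classical
  intro heq
  have hconn := hT.isConnected
  obtain ⟨pu, hpu, hlu⟩ := exists_geodesic (hconn.preconnected r u)
  obtain ⟨pw, hpw, hlw⟩ := exists_geodesic (hconn.preconnected r w)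
  have hne : u ≠ w := hadj.ne
  -- w is not in the support of pu
  have hw : w ∉ pu.support := by
    intro hmem
    have h1 : T.dist r w ≤ (pu.takeUntil w hmem).length := SimpleGraph.dist_le _
    have h2 := congrArg SimpleGraph.Walk.length (pu.take_spec hmem)
    rw [SimpleGraph.Walk.length_append] at h2
    have h3 : (pu.dropUntil w hmem).length = 0 := by omega
    exact hne ((SimpleGraph.Walk.eq_of_length_eq_zero h3).symm)
  have hq : (SimpleGraph.Walk.cons hadj.symm pu.reverse).IsPath := by
    apply hpu.reverse.cons
    rwa [SimpleGraph.Walk.support_reverse, List.mem_reverse]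
  have := hT.IsAcyclic.path_unique ⟨_, hq⟩ ⟨_, hpw.reverse⟩
  have hlen := congrArg (fun p : T.Path w r => p.1.length) this
  simp only [SimpleGraph.Walk.length_cons, SimpleGraph.Walk.length_reverse] at hlen
  omega

/-- In a tree, a vertex has at most one neighbor strictly closer to the root. -/
lemma tree_near_unique (hT : T.IsTree) (r : V) {w u₁ u₂ : V}
    (h1 : T.Adj w u₁) (h2 : T.Adj w u₂)
    (hd1 : T.dist r u₁ + 1 = T.dist r w) (hd2 : T.dist r u₂ + 1 = T.dist r w) :
    u₁ = u₂ := by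
  classical
  have hconn := hT.isConnected
  obtain ⟨p1, hp1, hl1⟩ := exists_geodesic (hconn.preconnected r u₁)
  obtain ⟨p2, hp2, hl2⟩ := exists_geodesic (hconn.preconnected r u₂)
  have hw1 : w ∉ p1.support := by
    intro hmem
    have := SimpleGraph.dist_le (p1.takeUntil w hmem)
    have := p1.length_takeUntil_le hmem
    omega
  have hw2 : w ∉ p2.support := by
    intro hmem
    have := SimpleGraph.dist_le (p2.takeUntil w hmem)
    have := p2.length_takeUntil_le hmem
    omega
  have hq1 : (SimpleGraph.Walk.cons h1 p1.reverse).IsPath := by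
    apply hp1.reverse.cons
    rwa [SimpleGraph.Walk.support_reverse, List.mem_reverse]
  have hq2 : (SimpleGraph.Walk.cons h2 p2.reverse).IsPath := by
    apply hp2.reverse.cons
    rwa [SimpleGraph.Walk.support_reverse, List.mem_reverse]
  have := hT.IsAcyclic.path_unique ⟨_, hq1⟩ ⟨_, hq2⟩
  have heq : SimpleGraph.Walk.cons h1 p1.reverse = SimpleGraph.Walk.cons h2 p2.reverse :=
    congrArg Subtype.val this
  injection heq

/-- Key lemma: if `W` is nonempty, all neighbors of `W`-vertices lie in `W ∪ X`,
`r ∉ W` and `X \ {r}` has at most one element, then some vertex of `W` has degree at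
most `2` in the tree `T`. -/
lemma key_lemma [Fintype V] (hT : T.IsTree) {W X : Set V} {r : V}
    (hr : r ∉ W) (hWne : W.Nonempty) (hX : (X \ {r}).ncard ≤ 1)
    (hclosed : ∀ w ∈ W, ∀ u, T.Adj w u → u ∈ W ∪ X) :
    ∃ w ∈ W, (T.neighborSet w).ncard ≤ 2 := by
  classical
  by_contra hcon
  push_neg at hcon
  have hconn := hT.isConnected
  obtain ⟨w, hwW, hmax⟩ := Set.exists_max_image W (fun w => T.dist r w) W.toFinite hWne
  set d := T.dist r w with hd
  have hrw : r ≠ w := fun h => hr (h ▸ hwW)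
  have hdpos : 1 ≤ d := hconn.pos_dist_of_ne hrw
  -- classify the neighbors of w
  set Nnear : Set V := {u | T.Adj w u ∧ T.dist r u + 1 = d} with hNnear
  have hsub : T.neighborSet w ⊆ (X \ {r}) ∪ Nnear := by
    intro u hu
    have hadj : T.Adj w u := hu
    have hne : T.dist r u ≠ d := tree_adj_dist_ne hT r hadj.symm
    have htri1 : T.dist r w ≤ T.dist r u + T.dist u w := hconn.dist_triangle
    have htri2 : T.dist r u ≤ T.dist r w + T.dist w u := hconn.dist_triangle
    have huw1 : T.dist u w ≤ 1 := by
      have := SimpleGraph.dist_le (SimpleGraph.Walk.cons hadj.symm SimpleGraph.Walk.nil)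
      simpa using this
    have huw2 : T.dist w u ≤ 1 := by
      have := SimpleGraph.dist_le (SimpleGraph.Walk.cons hadj SimpleGraph.Walk.nil)
      simpa using this
    rcases Nat.lt_or_ge (T.dist r u) d with hlt | hge
    · exact Or.inr ⟨hadj, by omega⟩
    · -- dist r u = d + 1 : u cannot be in W, so u ∈ X \ {r}
      have hdu : T.dist r u = d + 1 := by omega
      have huWX : u ∈ W ∪ X := hclosed w hwW u hadj
      have huW : u ∉ W := by
        intro huW
        have := hmax u huW
        omega
      have hur : u ≠ r := by
        intro h
        rw [h, SimpleGraph.dist_self] at hdu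
        omega
      rcases huWX with h | h
      · exact absurd h huW
      · exact Or.inl ⟨h, hur⟩
  have hNnear1 : Nnear.ncard ≤ 1 := by
    rw [Set.ncard_le_one (Set.toFinite _)]
    rintro a ⟨ha1, ha2⟩ b ⟨hb1, hb2⟩
    exact tree_near_unique hT r ha1 hb1 ha2 hb2
  have hcard : (T.neighborSet w).ncard ≤ ((X \ {r}) ∪ Nnear).ncard :=
    Set.ncard_le_ncard hsub (Set.toFinite _)
  have hcard2 : ((X \ {r}) ∪ Nnear).ncard ≤ (X \ {r}).ncard + Nnear.ncard :=
    Set.ncard_union_le _ _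
  have := hcon w hwW
  omega

end Aux

/-- For every tree `T`, every family of pairwise independent `(≤2)`-separations of `T`
has size at most `β(T)`. -/
theorem stmt2 {V : Type*} [Fintype V] (T : SimpleGraph V) (hT : T.IsTree)
    (n : ℕ) (F : Fin n → T.Subgraph × T.Subgraph)
    (hsep : ∀ i, IsSepLE2 T (F i).1 (F i).2)
    (hind : ∀ i j, i ≠ j → IndepSeps (F i).1 (F i).2 (F j).1 (F j).2) :
    n ≤ beta T := by
  classical
  -- for each separation, choose a private vertex of the first side of degree ≤ 2
  have key : ∀ i : Fin n, ∃ x, x ∈ (F i).1.verts \ (F i).2.verts ∧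
      (T.neighborSet x).ncard ≤ 2 := by
    intro i
    obtain ⟨k, hk, hdisj, hsup, hA, hB, hcard⟩ := hsep i
    set A := (F i).1 with hAdef
    set B := (F i).2 with hBdef
    set W : Set V := A.verts \ B.verts with hWdef
    set X : Set V := A.verts ∩ B.verts with hXdef
    have hclosed : ∀ w ∈ W, ∀ u, T.Adj w u → u ∈ W ∪ X := by
      intro w hw u hadj
      have htop : (⊤ : T.Subgraph).Adj w u := SimpleGraph.Subgraph.top_adj.mpr hadj
      rw [← hsup, SimpleGraph.Subgraph.sup_adj] at htop
      rcases htop with h | h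
      · have huA : u ∈ A.verts := h.snd_mem
        by_cases huB : u ∈ B.verts
        · exact Or.inr ⟨huA, huB⟩
        · exact Or.inl ⟨huA, huB⟩
      · exact absurd h.fst_mem hw.2
    rcases X.eq_empty_or_nonempty with hXe | hXne
    · obtain ⟨r, hrB, hrA⟩ := hB
      have hr : r ∉ W := fun h => hrA h.1
      have hX1 : (X \ {r}).ncard ≤ 1 := by
        rw [hXe]
        simp
      obtain ⟨w, hw1, hw2⟩ := key_lemma hT hr hA hX1 hclosed
      exact ⟨w, hw1, hw2⟩
    · obtain ⟨r, hrX⟩ := hXne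
      have hr : r ∉ W := fun h => h.2 hrX.2
      have hX1 : (X \ {r}).ncard ≤ 1 := by
        rw [Set.ncard_diff_singleton_of_mem hrX]
        omega
      obtain ⟨w, hw1, hw2⟩ := key_lemma hT hr hA hX1 hclosed
      exact ⟨w, hw1, hw2⟩
  choose v hv1 hv2 using key
  -- the chosen vertices are pairwise distinct
  have hinj : Function.Injective v := by
    intro i j hij
    by_contra hne
    have h2 := (hind i j hne).2
    have : v i ∈ (F i).1.verts \ (F i).2.verts ∩ ((F j).1.verts \ (F j).2.verts) :=
      ⟨hv1 i, hij ▸ hv1 j⟩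
    rw [h2] at this
    exact this
  -- the chosen vertices form a stable set
  have hstab : ∀ i j : Fin n, ¬ T.Adj (v i) (v j) := by
    intro i j hadj
    rcases eq_or_ne i j with rfl | hne
    · exact T.irrefl hadj
    · have hAi : (F i).1.Adj (v i) (v j) := by
        have htop : (⊤ : T.Subgraph).Adj (v i) (v j) := SimpleGraph.Subgraph.top_adj.mpr hadj
        obtain ⟨k, hk, hdisj, hsup, _⟩ := hsep i
        rw [← hsup, SimpleGraph.Subgraph.sup_adj] at htop
        rcases htop with h | h
        · exact h
        · exact absurd h.fst_mem (hv1 i).2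
      have hAj : (F j).1.Adj (v i) (v j) := by
        have htop : (⊤ : T.Subgraph).Adj (v i) (v j) := SimpleGraph.Subgraph.top_adj.mpr hadj
        obtain ⟨k, hk, hdisj, hsup, _⟩ := hsep j
        rw [← hsup, SimpleGraph.Subgraph.sup_adj] at htop
        rcases htop with h | h
        · exact h
        · exact absurd h.snd_mem (hv1 j).2
      have hm1 : s(v i, v j) ∈ sepMinusEdges (F i).1 (F i).2 := by
        refine ⟨SimpleGraph.Subgraph.mem_edgeSet.mpr hAi, ?_⟩
        intro hall
        exact (hv1 i).2 (hall (v i) (Sym2.mem_mk_left _ _)).2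
      have hm2 : s(v i, v j) ∈ sepMinusEdges (F j).1 (F j).2 := by
        refine ⟨SimpleGraph.Subgraph.mem_edgeSet.mpr hAj, ?_⟩
        intro hall
        exact (hv1 j).2 (hall (v j) (Sym2.mem_mk_right _ _)).2
      have h1 := (hind i j hne).1
      have : s(v i, v j) ∈ sepMinusEdges (F i).1 (F i).2 ∩ sepMinusEdges (F j).1 (F j).2 :=
        ⟨hm1, hm2⟩
      rw [h1] at this
      exact this
  -- assemble the stable set
  have hmem : n ∈ {n | ∃ S : Set V, S.ncard = n ∧ (∀ v ∈ S, (T.neighborSet v).ncard ≤ 2) ∧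
      (∀ u ∈ S, ∀ w ∈ S, ¬ T.Adj u w)} := by
    refine ⟨Set.range v, ?_, ?_, ?_⟩
    · rw [← Set.image_univ, Set.ncard_image_of_injective _ hinj, Set.ncard_univ]
      simp
    · rintro _ ⟨i, rfl⟩
      exact hv2 i
    · rintro _ ⟨i, rfl⟩ _ ⟨j, rfl⟩
      exact hstab i j
  have hbdd : BddAbove {n | ∃ S : Set V, S.ncard = n ∧ (∀ v ∈ S, (T.neighborSet v).ncard ≤ 2) ∧
      (∀ u ∈ S, ∀ w ∈ S, ¬ T.Adj u w)} := by
    refine ⟨Fintype.card V, ?_⟩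
    rintro m ⟨S, rfl, -, -⟩
    have := Set.ncard_le_ncard (Set.subset_univ S) Set.finite_univ
    rwa [Set.ncard_univ, Nat.card_eq_fintype_card] at this
  exact le_csSup hbdd hmem
end

section
/- Let T be a tree, let k ≥ 1, and let (A₁,B₁), …, (A_k,B_k) be pairwise independent (≤2)-separations of T chosen, among all families of k pairwise independent (≤2)-separations of T, so as to minimise Σᵢ |V(Aᵢ)|. Then for each i there is a vertex vᵢ with V(Aᵢ) \ V(Bᵢ) = {vᵢ} and N_T(vᵢ) = V(Aᵢ) ∩ V(Bᵢ) (so vᵢ has degree at most 2 in T), and {v₁, …, v_k} is a stable set in T. -/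
open SimpleGraph

namespace Stmt3Aux


variable {V : Type*} {T : SimpleGraph V}

lemma dist_add_dist_le_length {b y z : V} (p : T.Walk b y) (hz : z ∈ p.support) :
    T.dist b z + T.dist z y ≤ p.length := by
  classical
  calc T.dist b z + T.dist z y
      ≤ (p.takeUntil z hz).length + (p.dropUntil z hz).length :=
        Nat.add_le_add (dist_le _) (dist_le _)
    _ = p.length := by rw [← Walk.length_append, p.take_spec hz]

lemma exists_parent (hc : T.Connected) {b x : V} (hbx : x ≠ b) :
    ∃ y, T.Adj x y ∧ T.dist b y + 1 = T.dist b x := by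
  obtain ⟨p, hlen⟩ := (hc b x).exists_walk_length_eq_dist
  obtain ⟨y, h, q, hq⟩ := Walk.exists_eq_cons_of_ne hbx p.reverse
  refine ⟨y, h, ?_⟩
  have hql : q.length + 1 = T.dist b x := by
    have := congrArg Walk.length hq
    simpa [hlen] using this.symm
  have h1 : T.dist b y ≤ q.length := by
    have := dist_le q.reverse
    simpa [SimpleGraph.dist_comm] using this
  have h2 : T.dist b x ≤ T.dist b y + 1 := by
    have ht := hc.dist_triangle (u := b) (v := y) (w := x)
    have : T.dist y x = 1 := (dist_eq_one_iff_adj).2 h.symm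
    omega
  omega

lemma exists_path_through (hT : T.IsTree) {b x y : V} (h : T.Adj x y)
    (hle : T.dist b y ≤ T.dist b x) :
    ∃ Q : T.Walk b x, Q.IsPath ∧ Q.length = T.dist b y + 1 ∧ Q.getVert (T.dist b y) = y := by
  obtain ⟨p, hp, hlen⟩ := hT.isConnected.exists_path_of_dist b y
  have hxs : x ∉ p.support := by
    intro hx
    have h1 := dist_add_dist_le_length p hx
    have h2 : T.dist x y = 1 := (dist_eq_one_iff_adj).2 h
    omega
  refine ⟨p.concat h.symm, ?_, by simp [Walk.length_concat, hlen], ?_⟩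
  · rw [← Walk.isPath_reverse_iff, Walk.reverse_concat]
    exact Walk.IsPath.cons (by rwa [Walk.isPath_reverse_iff]) (by
      simpa [Walk.support_reverse] using hxs)
  · rw [Walk.concat_eq_append, Walk.getVert_append]
    simp [hlen]

lemma path_eq_of_tree (hT : T.IsTree) {b x : V} {p q : T.Walk b x}
    (hp : p.IsPath) (hq : q.IsPath) : p = q := by
  have := hT.IsAcyclic.path_unique ⟨p, hp⟩ ⟨q, hq⟩
  exact congrArg Subtype.val this

lemma dist_ne_of_adj (hT : T.IsTree) {b x y : V} (h : T.Adj x y) :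
    T.dist b y ≠ T.dist b x := by
  intro he
  obtain ⟨Q, hQ, hQl, _⟩ := exists_path_through hT h he.le
  obtain ⟨P, hP, hPl⟩ := hT.isConnected.exists_path_of_dist b x
  have := path_eq_of_tree hT hQ hP
  have := congrArg Walk.length this
  omega

lemma parent_unique (hT : T.IsTree) {b x y y' : V} (hy : T.Adj x y) (hy' : T.Adj x y')
    (hd : T.dist b y < T.dist b x) (hd' : T.dist b y' < T.dist b x) : y = y' := by
  have htri : ∀ z : V, T.Adj x z → T.dist b x ≤ T.dist b z + 1 := by
    intro z hz
    have ht := hT.isConnected.dist_triangle (u := b) (v := z) (w := x)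
    have : T.dist z x = 1 := (dist_eq_one_iff_adj).2 hz.symm
    omega
  have he : T.dist b y = T.dist b x - 1 := by have := htri y hy; omega
  have he' : T.dist b y' = T.dist b x - 1 := by have := htri y' hy'; omega
  obtain ⟨Q, hQ, hQl, hQv⟩ := exists_path_through hT hy hd.le
  obtain ⟨Q', hQ', hQl', hQv'⟩ := exists_path_through hT hy' hd'.le
  have hqq : Q = Q' := path_eq_of_tree hT hQ hQ'
  rw [← hQv, ← hQv', hqq, he, he']



variable {V : Type*} {T : SimpleGraph V}

/-- The star at `v`: subgraph with vertices `N[v]` and all edges at `v`. -/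
def starSub (T : SimpleGraph V) (v : V) : T.Subgraph where
  verts := insert v (T.neighborSet v)
  Adj a b := T.Adj a b ∧ (a = v ∨ b = v)
  adj_sub h := h.1
  edge_vert {a b} h := by
    rcases h.2 with rfl | rfl
    · exact Set.mem_insert _ _
    · exact Set.mem_insert_of_mem _ h.1.symm
  symm := ⟨fun a b h => ⟨h.1.symm, h.2.symm⟩⟩

/-- The complement part: everything except `v`, and all edges avoiding `v`. -/
def coStar (T : SimpleGraph V) (v : V) : T.Subgraph where
  verts := {v}ᶜ
  Adj a b := T.Adj a b ∧ a ≠ v ∧ b ≠ v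
  adj_sub h := h.1
  edge_vert h := h.2.1
  symm := ⟨fun a b h => ⟨h.1.symm, h.2.2, h.2.1⟩⟩

lemma starSub_verts (v : V) : (starSub T v).verts = insert v (T.neighborSet v) := rfl
lemma coStar_verts (v : V) : (coStar T v).verts = {v}ᶜ := rfl

lemma star_diff (v : V) : (starSub T v).verts \ (coStar T v).verts = {v} := by
  ext x
  simp only [starSub_verts, coStar_verts, Set.mem_diff, Set.mem_insert_iff,
    Set.mem_compl_iff, Set.mem_singleton_iff, not_not]
  constructor
  · rintro ⟨_, rfl⟩; rfl
  · rintro rfl; exact ⟨Or.inl rfl, rfl⟩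

lemma star_inter (v : V) :
    (starSub T v).verts ∩ (coStar T v).verts = T.neighborSet v := by
  ext x
  simp only [starSub_verts, coStar_verts, Set.mem_inter_iff, Set.mem_insert_iff,
    Set.mem_compl_iff, Set.mem_singleton_iff, mem_neighborSet]
  constructor
  · rintro ⟨rfl | hx, hne⟩
    · exact absurd rfl hne
    · exact hx
  · intro hx
    exact ⟨Or.inr hx, fun he => by subst he; exact T.irrefl hx⟩

lemma star_sep (v : V) (hne : ∃ w, w ∉ insert v (T.neighborSet v)) :
    IsSeparation T (starSub T v) (coStar T v) (T.neighborSet v).ncard := by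
  refine ⟨?_, ?_, ?_, ?_, by rw [star_inter]⟩
  · rw [Set.disjoint_left]
    intro e he he'
    induction e with
    | h a b =>
      rw [Subgraph.mem_edgeSet] at he he'
      rcases he.2 with rfl | rfl
      · exact he'.2.1 rfl
      · exact he'.2.2 rfl
  · refine SimpleGraph.Subgraph.ext ?_ (funext fun a => funext fun b => propext ?_)
    · ext x
      simp only [Subgraph.verts_sup, Subgraph.verts_top, Set.mem_union, Set.mem_univ,
        iff_true, starSub_verts, coStar_verts, Set.mem_insert_iff, Set.mem_compl_iff,
        Set.mem_singleton_iff]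
      by_cases h : x = v
      · exact Or.inl (Or.inl h)
      · exact Or.inr h
    · simp only [Subgraph.sup_adj, Subgraph.top_adj]
      constructor
      · rintro (h | h) <;> exact h.1
      · intro h
        by_cases ha : a = v
        · exact Or.inl ⟨h, Or.inl ha⟩
        · by_cases hb : b = v
          · exact Or.inl ⟨h, Or.inr hb⟩
          · exact Or.inr ⟨h, ha, hb⟩
  · rw [star_diff]; exact ⟨v, rfl⟩
  · obtain ⟨w, hw⟩ := hne
    refine ⟨w, ?_, hw⟩
    simp only [coStar_verts, Set.mem_compl_iff, Set.mem_singleton_iff]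
    intro h; exact hw (h ▸ Set.mem_insert _ _)

/-- Any edge of `T` incident to a vertex of `A \ B` is an edge of `A`, given `A ⊔ B = ⊤`. -/
lemma adj_of_sep {A B : T.Subgraph} (hsup : A ⊔ B = ⊤) {x y : V}
    (hx : x ∈ A.verts \ B.verts) (h : T.Adj x y) : A.Adj x y := by
  have : (A ⊔ B).Adj x y := by rw [hsup, Subgraph.top_adj]; exact h
  rcases (Subgraph.sup_adj).1 this with h' | h'
  · exact h'
  · exact absurd h'.fst_mem hx.2

lemma star_sepMinus_subset {A B : T.Subgraph} (hsup : A ⊔ B = ⊤) {v : V}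
    (hv : v ∈ A.verts \ B.verts) :
    sepMinusEdges (starSub T v) (coStar T v) ⊆ sepMinusEdges A B := by
  intro e he
  induction e with
  | h a b =>
    obtain ⟨he1, -⟩ := he
    rw [Subgraph.mem_edgeSet] at he1
    obtain ⟨hab, hor⟩ := he1
    have key : ∀ c : V, T.Adj v c → (s(v, c) ∈ sepMinusEdges A B) := by
      intro c hc
      refine ⟨Subgraph.mem_edgeSet.2 (adj_of_sep hsup hv hc), ?_⟩
      intro hall
      have := hall v (by simp)
      exact hv.2 this.2
    rcases hor with rfl | rfl
    · exact key b hab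
    · rw [Sym2.eq_swap]
      exact key a hab.symm

end Stmt3Aux

/-- If `(A₁,B₁), …, (A_k,B_k)` are pairwise independent `(≤2)`-separations of a tree `T`
minimising `Σᵢ |V(Aᵢ)|` among all such families of size `k`, then each `V(Aᵢ) \ V(Bᵢ)` is a
single vertex `vᵢ` with `N_T(vᵢ) = V(Aᵢ) ∩ V(Bᵢ)` (so `vᵢ` has degree at most 2 in `T`),
and `{v₁, …, v_k}` is a stable set in `T`. -/
theorem stmt3 {V : Type*} [Fintype V] (T : SimpleGraph V) (hT : T.IsTree)
    (k : ℕ) (hk : 1 ≤ k) (A B : Fin k → T.Subgraph)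
    (hsep : ∀ i, IsSepLE2 T (A i) (B i))
    (hind : ∀ i j, i ≠ j → IndepSeps (A i) (B i) (A j) (B j))
    (hmin : ∀ A' B' : Fin k → T.Subgraph,
      (∀ i, IsSepLE2 T (A' i) (B' i)) →
      (∀ i j, i ≠ j → IndepSeps (A' i) (B' i) (A' j) (B' j)) →
      ∑ i, (A i).verts.ncard ≤ ∑ i, (A' i).verts.ncard) :
    ∃ v : Fin k → V,
      (∀ i, (A i).verts \ (B i).verts = {v i}) ∧
      (∀ i, T.neighborSet (v i) = (A i).verts ∩ (B i).verts) ∧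
      (∀ i, (T.neighborSet (v i)).ncard ≤ 2) ∧
      (∀ i j, ¬ T.Adj (v i) (v j)) := by
  classical
  have hconn := hT.isConnected
  have hsup : ∀ l, A l ⊔ B l = ⊤ := by
    intro l; obtain ⟨s, -, -, h, -⟩ := hsep l; exact h
  -- The replacement bound coming from minimality
  have repl : ∀ i v, v ∈ (A i).verts \ (B i).verts → (T.neighborSet v).ncard ≤ 2 →
      (A i).verts.ncard ≤ 1 + (T.neighborSet v).ncard := by
    intro i v hv hdeg
    obtain ⟨s, hs2, hdisj, hsupi, hXne, hYne, hScard⟩ := hsep i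
    have hNsub : insert v (T.neighborSet v) ⊆ (A i).verts := by
      intro y hy
      rcases Set.mem_insert_iff.1 hy with rfl | hy
      · exact hv.1
      · exact (Stmt3Aux.adj_of_sep hsupi hv hy).snd_mem
    obtain ⟨b, hbB, hbA⟩ := hYne
    have hbni : b ∉ insert v (T.neighborSet v) := fun h => hbA (hNsub h)
    set Av := Stmt3Aux.starSub T v with hAv
    set Bv := Stmt3Aux.coStar T v with hBv
    have hsepv : IsSepLE2 T Av Bv := ⟨_, hdeg, Stmt3Aux.star_sep v ⟨b, hbni⟩⟩
    have hindv : ∀ j, j ≠ i → IndepSeps Av Bv (A j) (B j) ∧ IndepSeps (A j) (B j) Av Bv := by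
      intro j hj
      have hIJ := hind i j (fun h => hj h.symm)
      have hE : sepMinusEdges Av Bv ∩ sepMinusEdges (A j) (B j) = ∅ := by
        rw [← Set.subset_empty_iff, ← hIJ.1]
        exact Set.inter_subset_inter_left _ (Stmt3Aux.star_sepMinus_subset hsupi hv)
      have hV : (Av.verts \ Bv.verts) ∩ ((A j).verts \ (B j).verts) = ∅ := by
        rw [Stmt3Aux.star_diff, ← Set.subset_empty_iff, ← hIJ.2]
        exact Set.inter_subset_inter_left _ (Set.singleton_subset_iff.2 hv)
      exact ⟨⟨hE, hV⟩, ⟨by rw [Set.inter_comm]; exact hE, by rw [Set.inter_comm]; exact hV⟩⟩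
    have hmin' := hmin (Function.update A i Av) (Function.update B i Bv) ?_ ?_
    · have hupd : ∀ j, ((Function.update A i Av) j).verts.ncard
          = Function.update (fun j => (A j).verts.ncard) i (Av.verts.ncard) j := by
        intro j
        by_cases hj : j = i
        · subst hj; simp
        · simp [Function.update_of_ne hj]
      rw [Finset.sum_congr rfl (fun j _ => hupd j),
        Finset.sum_update_of_mem (Finset.mem_univ i)] at hmin'
      have hsplit : ∑ j, (A j).verts.ncard
          = (A i).verts.ncard + ∑ j ∈ Finset.univ \ {i}, (A j).verts.ncard := by
        rw [Finset.sdiff_singleton_eq_erase]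
        exact (Finset.add_sum_erase _ _ (Finset.mem_univ i)).symm
      have hAvcard : Av.verts.ncard = 1 + (T.neighborSet v).ncard := by
        rw [hAv, Stmt3Aux.starSub_verts,
          Set.ncard_insert_of_notMem (s := T.neighborSet v)
            (fun h => T.irrefl h) (Set.toFinite _)]
        omega
      rw [hsplit, hAvcard] at hmin'
      omega
    · intro j
      by_cases hj : j = i
      · subst hj; simpa using hsepv
      · simpa [Function.update_of_ne hj] using hsep j
    · intro j l hjl
      by_cases hj : j = i
      · subst hj
        simpa [Function.update_of_ne (Ne.symm hjl)] using (hindv l (Ne.symm hjl)).1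
      · by_cases hl : l = i
        · subst hl
          simpa [Function.update_of_ne hj] using (hindv j hj).2
        · simpa [Function.update_of_ne hj, Function.update_of_ne hl] using hind j l hjl
  -- The key per-index structure
  have key : ∀ i, ∃ v, (A i).verts \ (B i).verts = {v} ∧
      T.neighborSet v = (A i).verts ∩ (B i).verts := by
    intro i
    obtain ⟨s, hs2, hdisj, hsupi, hXne, hYne, hScard⟩ := hsep i
    set X := (A i).verts \ (B i).verts with hXdef
    set S := (A i).verts ∩ (B i).verts with hSdef
    obtain ⟨b, hbB, hbA⟩ := hYne
    have hnbr : ∀ x ∈ X, ∀ y, T.Adj x y → y ∈ (A i).verts :=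
      fun x hx y h => (Stmt3Aux.adj_of_sep hsupi hx h).snd_mem
    have hxb : ∀ x ∈ X, x ≠ b := fun x hx he => hbA (he ▸ hx.1)
    have hdesc : ∀ n, ∀ x ∈ X, T.dist b x ≤ n → ∃ y ∈ S, T.dist b y < T.dist b x := by
      intro n
      induction n with
      | zero =>
        intro x hx hd
        exfalso
        have := hconn.pos_dist_of_ne (Ne.symm (hxb x hx))
        omega
      | succ n ih =>
        intro x hx hd
        obtain ⟨y, hadj, hdy⟩ := Stmt3Aux.exists_parent hconn (hxb x hx)
        have hyA : y ∈ (A i).verts := hnbr x hx y hadj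
        by_cases hyB : y ∈ (B i).verts
        · exact ⟨y, ⟨hyA, hyB⟩, by omega⟩
        · obtain ⟨z, hzS, hzd⟩ := ih y ⟨hyA, hyB⟩ (by omega)
          exact ⟨z, hzS, by omega⟩
    obtain ⟨x, hxX, hxmax⟩ := Set.exists_max_image X (fun z => T.dist b z) (Set.toFinite X) hXne
    obtain ⟨y₀, hy₀S, hy₀d⟩ := hdesc (T.dist b x) x hxX le_rfl
    obtain ⟨p, hpadj, hpd⟩ := Stmt3Aux.exists_parent hconn (hxb x hxX)
    have hclass : T.neighborSet x ⊆ insert p (S \ {y₀}) := by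
      intro y hy
      rw [SimpleGraph.mem_neighborSet] at hy
      rcases lt_trichotomy (T.dist b y) (T.dist b x) with hlt | heq | hgt
      · exact Set.mem_insert_iff.2 (Or.inl
          (Stmt3Aux.parent_unique hT hy hpadj hlt (by omega)))
      · exact absurd heq (Stmt3Aux.dist_ne_of_adj hT hy)
      · have hyA : y ∈ (A i).verts := hnbr x hxX y hy
        have hyX : y ∉ X := fun h => absurd (hxmax y h) (by omega)
        have hyB : y ∈ (B i).verts := by
          by_contra h; exact hyX ⟨hyA, h⟩
        refine Set.mem_insert_iff.2 (Or.inr ⟨⟨hyA, hyB⟩, ?_⟩)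
        intro h
        rw [Set.mem_singleton_iff] at h
        subst h
        omega
    have hy₀card : 1 ≤ S.ncard := by
      have := Set.ncard_pos (Set.toFinite S)
      exact this.2 ⟨y₀, hy₀S⟩
    have hdegx : (T.neighborSet x).ncard ≤ s := by
      calc (T.neighborSet x).ncard ≤ (insert p (S \ {y₀})).ncard :=
            Set.ncard_le_ncard hclass (Set.toFinite _)
        _ ≤ (S \ {y₀}).ncard + 1 := Set.ncard_insert_le _ _
        _ ≤ s := by
            rw [Set.ncard_diff_singleton_of_mem hy₀S]
            omega
    have hAcard : (A i).verts.ncard = X.ncard + S.ncard := by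
      rw [← Set.ncard_union_eq (by
        rw [Set.disjoint_left]; exact fun z hz h => hz.2 h.2)]
      congr 1
      ext z
      simp only [hXdef, hSdef, Set.mem_union, Set.mem_diff, Set.mem_inter_iff]
      by_cases hB : z ∈ (B i).verts <;> tauto
    have hrep1 := repl i x hxX (le_trans hdegx hs2)
    have hXpos : 0 < X.ncard := (Set.ncard_pos (Set.toFinite X)).2 hXne
    have hX1 : X.ncard = 1 := by omega
    obtain ⟨v, hv⟩ := Set.ncard_eq_one.1 hX1
    refine ⟨v, hv, ?_⟩
    have hvX : v ∈ X := hv ▸ rfl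
    have hNS : T.neighborSet v ⊆ S := by
      intro y hy
      rw [SimpleGraph.mem_neighborSet] at hy
      have hyA := hnbr v hvX y hy
      by_cases hyB : y ∈ (B i).verts
      · exact ⟨hyA, hyB⟩
      · exfalso
        have hyX : y ∈ X := ⟨hyA, hyB⟩
        rw [hv, Set.mem_singleton_iff] at hyX
        subst hyX
        exact T.irrefl hy
    have hdegv : (T.neighborSet v).ncard ≤ S.ncard :=
      Set.ncard_le_ncard hNS (Set.toFinite S)
    have hrep2 := repl i v hvX (by omega)
    exact Set.eq_of_subset_of_ncard_le hNS (by omega) (Set.toFinite _)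
  choose v hv1 hv2 using key
  refine ⟨v, hv1, hv2, ?_, ?_⟩
  · intro i
    obtain ⟨s, hs2, -, -, -, -, hScard⟩ := hsep i
    rw [hv2 i, hScard]
    exact hs2
  · intro i j h
    have hvX : ∀ l, v l ∈ (A l).verts \ (B l).verts := fun l => (hv1 l) ▸ rfl
    by_cases hij : i = j
    · subst hij; exact T.irrefl h
    · have e1 : s(v i, v j) ∈ sepMinusEdges (A i) (B i) := by
        refine ⟨SimpleGraph.Subgraph.mem_edgeSet.2
          (Stmt3Aux.adj_of_sep (hsup i) (hvX i) h), ?_⟩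
        intro hall
        exact (hvX i).2 (hall (v i) (by simp)).2
      have e2 : s(v i, v j) ∈ sepMinusEdges (A j) (B j) := by
        refine ⟨?_, ?_⟩
        · rw [Sym2.eq_swap]
          exact SimpleGraph.Subgraph.mem_edgeSet.2
            (Stmt3Aux.adj_of_sep (hsup j) (hvX j) h.symm)
        · intro hall
          exact (hvX j).2 (hall (v j) (by simp)).2
      have := (hind i j hij).1
      rw [Set.eq_empty_iff_forall_notMem] at this
      exact this _ ⟨e1, e2⟩
end

section
/- Let J be a graph and let (J₁,J₂) and (J₁′,J₂′) be two pairs of subgraphs of J with J₁ ∪ J₂ = J and J₁′ ∪ J₂′ = J. For a,b ∈ {1,2} define J_{a,b}¹ := J_a ∩ J_b′ and J_{a,b}² := J_{3−a} ∪ J_{3−b}′. Then for all a,b ∈ {1,2}: |V(J_{a,b}¹) ∩ V(J_{a,b}²)| + |V(J_{3−a,3−b}¹) ∩ V(J_{3−a,3−b}²)| ≤ |V(J₁) ∩ V(J₂)| + |V(J₁′) ∩ V(J₂′)|. -/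
open SimpleGraph

lemma aux_ncard {V : Type*} [Fintype V] (S1 S2 X Y : Set V)
    (h1 : S1 ∪ S2 ⊆ X ∪ Y) (h2 : S1 ∩ S2 ⊆ X ∩ Y) :
    S1.ncard + S2.ncard ≤ X.ncard + Y.ncard := by
  have e1 : S1.ncard + S2.ncard = (S1 ∪ S2).ncard + (S1 ∩ S2).ncard :=
    (Set.ncard_union_add_ncard_inter S1 S2 (Set.toFinite _) (Set.toFinite _)).symm
  have e2 : X.ncard + Y.ncard = (X ∪ Y).ncard + (X ∩ Y).ncard :=
    (Set.ncard_union_add_ncard_inter X Y (Set.toFinite _) (Set.toFinite _)).symm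
  rw [e1, e2]
  exact Nat.add_le_add (Set.ncard_le_ncard h1 (Set.toFinite _))
    (Set.ncard_le_ncard h2 (Set.toFinite _))

/-- Submodularity-type inequality for crossings of two separations: if `J₁ ∪ J₂ = J` and
`J₁′ ∪ J₂′ = J` (as subgraphs), then for all `a, b ∈ {1,2}`,
`|V(J_a ∩ J_b′) ∩ V(J_{3−a} ∪ J_{3−b}′)| + |V(J_{3−a} ∩ J_{3−b}′) ∩ V(J_a ∪ J_b′)|
  ≤ |V(J₁) ∩ V(J₂)| + |V(J₁′) ∩ V(J₂′)|`.
Here the two pairs are encoded as `P, Q : Bool → J.Subgraph`. -/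
theorem stmt5 {V : Type*} [Fintype V] {J : SimpleGraph V}
    (P Q : Bool → J.Subgraph)
    (hP : P true ⊔ P false = ⊤) (hQ : Q true ⊔ Q false = ⊤) :
    ∀ a b : Bool,
      ((P a ⊓ Q b).verts ∩ (P (!a) ⊔ Q (!b)).verts).ncard +
        ((P (!a) ⊓ Q (!b)).verts ∩ (P a ⊔ Q b).verts).ncard ≤
      ((P true).verts ∩ (P false).verts).ncard +
        ((Q true).verts ∩ (Q false).verts).ncard := by
  intro a b
  have hA : (P true).verts ∩ (P false).verts = (P a).verts ∩ (P !a).verts := by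
    cases a <;> simp [Set.inter_comm]
  have hB : (Q true).verts ∩ (Q false).verts = (Q b).verts ∩ (Q !b).verts := by
    cases b <;> simp [Set.inter_comm]
  rw [hA, hB]
  simp only [Subgraph.verts_sup, Subgraph.verts_inf]
  apply aux_ncard
  · rintro x (⟨⟨hx1, hx2⟩, hx3 | hx3⟩ | ⟨⟨hx1, hx2⟩, hx3 | hx3⟩)
    · exact Or.inl ⟨hx1, hx3⟩
    · exact Or.inr ⟨hx2, hx3⟩
    · exact Or.inl ⟨hx3, hx1⟩
    · exact Or.inr ⟨hx3, hx2⟩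
  · rintro x ⟨⟨⟨h1, h2⟩, -⟩, ⟨⟨h3, h4⟩, -⟩⟩
    exact ⟨⟨h1, h3⟩, ⟨h2, h4⟩⟩
end

section
/- Let g ≥ 1 be an integer and let G be a graph with n ≥ 1 vertices such that every subgraph H of G satisfies |E(H)| ≤ 3(|V(H)| + g). Then the number of copies of K₃ (triangles) in G is at most (21/2)·g^{3/2} + 18n + 36g·(ln n + 1). -/
open SimpleGraph Finset

noncomputable def triW (g k : ℕ) : ℝ :=
  min (((k:ℝ)-1)*((k:ℝ)-2)/2) ((6 + 6*(g:ℝ)/(k:ℝ))^2/2)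

lemma sumCube (S : ℕ) :
    ∑ k ∈ Finset.Ioc 0 S, ((k:ℝ)-1)*((k:ℝ)-2)/2 ≤ (S:ℝ)^3/6 := by
  induction S with
  | zero => simp
  | succ n ih =>
    rw [Finset.sum_Ioc_succ_top (Nat.zero_le _)]
    push_cast
    nlinarith [ih, Nat.cast_nonneg (α := ℝ) n]

lemma sumInvSqAux {S : ℕ} (hS : 1 ≤ S) :
    ∀ n, S ≤ n → ∑ k ∈ Finset.Ioc S n, (1/(k:ℝ)^2) ≤ 1/(S:ℝ) - 1/(n:ℝ) := by
  refine Nat.le_induction ?_ ?_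
  · simp
  · intro n hn ih
    rw [Finset.sum_Ioc_succ_top hn]
    have hn0 : (0:ℝ) < n := by exact_mod_cast lt_of_lt_of_le hS hn
    have hn1 : (0:ℝ) < (n:ℝ) + 1 := by linarith
    have key : 1/((n:ℝ)+1)^2 ≤ 1/(n:ℝ) - 1/((n:ℝ)+1) := by
      rw [div_sub_div _ _ (ne_of_gt hn0) (ne_of_gt hn1)]
      rw [div_le_div_iff₀ (by positivity) (by positivity)]
      ring_nf
      nlinarith
    push_cast
    push_cast at ih
    linarith [ih]

lemma sumInvSq {S n : ℕ} (hS : 1 ≤ S) (hn : S ≤ n) :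
    ∑ k ∈ Finset.Ioc S n, (1/(k:ℝ)^2) ≤ 1/(S:ℝ) := by
  have hn0 : (0:ℝ) < n := by exact_mod_cast lt_of_lt_of_le hS hn
  have := sumInvSqAux hS n hn
  have : (0:ℝ) < 1/n := by positivity
  linarith [sumInvSqAux hS n hn]

lemma harmonic_cast_real (n : ℕ) :
    ((harmonic n : ℚ) : ℝ) = ∑ k ∈ Finset.Ioc 0 n, (1/(k:ℝ)) := by
  rw [harmonic_eq_sum_Icc]
  rw [show Finset.Icc 1 n = Finset.Ioc 0 n from Finset.Icc_add_one_left_eq_Ioc 0 n]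
  push_cast
  simp [one_div]

lemma sumInvTail {S n : ℕ} (hS : 1 ≤ S) (hn : S ≤ n) :
    ∑ k ∈ Finset.Ioc S n, (1/(k:ℝ)) ≤ Real.log n := by
  have split := Finset.sum_Ioc_consecutive (fun k => (1/(k:ℝ))) (Nat.zero_le S) hn
  have h1 : ((harmonic n : ℚ) : ℝ) ≤ 1 + Real.log n := by
    exact_mod_cast harmonic_le_one_add_log n
  have h2 : (1:ℝ) ≤ ∑ k ∈ Finset.Ioc 0 S, (1/(k:ℝ)) := by
    have : ((1:ℕ) : ℝ)⁻¹ ≤ ∑ k ∈ Finset.Ioc 0 S, (1/(k:ℝ)) := by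
      simp only [one_div]
      exact Finset.single_le_sum (f := fun k : ℕ => ((k:ℝ))⁻¹)
        (fun i _ => by positivity) (by simp [Finset.mem_Ioc, hS])
    simpa using this
  rw [harmonic_cast_real] at h1
  rw [← split] at h1
  linarith

lemma triW_le_cube (g k : ℕ) : triW g k ≤ ((k:ℝ)-1)*((k:ℝ)-2)/2 := min_le_left _ _

lemma triW_le_quad {g k : ℕ} (hk : 1 ≤ k) :
    triW g k ≤ 18 + 36*(g:ℝ)*(1/(k:ℝ)) + 18*(g:ℝ)^2*(1/(k:ℝ)^2) := by
  have hk0 : (k:ℝ) ≠ 0 := by positivity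
  have : (6 + 6*(g:ℝ)/(k:ℝ))^2/2 = 18 + 36*(g:ℝ)*(1/(k:ℝ)) + 18*(g:ℝ)^2*(1/(k:ℝ)^2) := by
    field_simp
    ring
  rw [← this]
  exact min_le_right _ _

lemma analytic (g n : ℕ) (hg : 1 ≤ g) (hn : 1 ≤ n) :
    ∑ k ∈ Finset.Ioc 0 n, triW g k ≤
      (21 / 2) * (g : ℝ) ^ ((3 : ℝ) / 2) + 18 * (n : ℝ) +
        36 * (g : ℝ) * (Real.log n + 1) := by
  set t : ℝ := Real.sqrt g with ht_def
  have hg0 : (0:ℝ) ≤ g := Nat.cast_nonneg g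
  have ht1 : 1 ≤ t := by
    rw [ht_def, show (1:ℝ) = Real.sqrt 1 from (Real.sqrt_one).symm]
    exact Real.sqrt_le_sqrt (by exact_mod_cast hg)
  have ht0 : 0 < t := lt_of_lt_of_le one_pos ht1
  have hgt : (g:ℝ) = t^2 := (Real.sq_sqrt hg0).symm
  have hg32 : (g : ℝ) ^ ((3 : ℝ) / 2) = t^3 := by
    rw [show (3:ℝ)/2 = (1/2) * 3 by ring, Real.rpow_mul hg0, ← Real.sqrt_eq_rpow,
      ← ht_def, show ((3:ℝ) : ℝ) = ((3:ℕ) : ℝ) by norm_num, Real.rpow_natCast]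
  have hlog : 0 ≤ Real.log n := Real.log_nonneg (by exact_mod_cast hn)
  set S : ℕ := ⌈2*t⌉₊ with hS_def
  have hS1 : 1 ≤ S := Nat.one_le_iff_ne_zero.mpr (by
    simp only [hS_def, ne_eq, Nat.ceil_eq_zero, not_le]
    linarith)
  have hSx : 2*t ≤ (S:ℝ) := Nat.le_ceil _
  have hSx2 : (S:ℝ) ≤ 2*t + 1 := (Nat.ceil_lt_add_one (by linarith)).le
  rcases lt_or_ge n S with hcase | hcase
  · -- n < S : every term bounded by (n-1)(n-2)/2 ≤ n^2/2
    have hn2t : (n:ℝ) < 2*t := by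
      have := (Nat.lt_ceil).mp hcase
      linarith
    have hbound : ∀ k ∈ Finset.Ioc 0 n, triW g k ≤ (n:ℝ)^2/2 := by
      intro k hk
      rw [Finset.mem_Ioc] at hk
      refine (triW_le_cube g k).trans ?_
      have h1 : (1:ℝ) ≤ (k:ℝ) := by exact_mod_cast hk.1
      have h2 : (k:ℝ) ≤ (n:ℝ) := by exact_mod_cast hk.2
      nlinarith
    have hsum := Finset.sum_le_card_nsmul _ _ _ hbound
    rw [Nat.card_Ioc, Nat.sub_zero, nsmul_eq_mul] at hsum
    have hn0 : (0:ℝ) ≤ n := Nat.cast_nonneg n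
    rw [hg32]
    have hcube : (n:ℝ)^3 ≤ (2*t)^3 := pow_le_pow_left₀ hn0 hn2t.le 3
    have hpos : 0 ≤ 36*(g:ℝ)*(Real.log n + 1) := by positivity
    nlinarith [hsum, hpos, hcube]
  · -- S ≤ n
    have hsplit := Finset.sum_Ioc_consecutive (fun k => triW g k) (Nat.zero_le S) hcase
    have hpart1 : ∑ k ∈ Finset.Ioc 0 S, triW g k ≤ (S:ℝ)^3/6 :=
      (Finset.sum_le_sum fun k _ => triW_le_cube g k).trans (sumCube S)
    have hpart2 : ∑ k ∈ Finset.Ioc S n, triW g k ≤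
        18*((n:ℝ)-(S:ℝ)) + 36*(g:ℝ)*Real.log n + 18*(g:ℝ)^2*(1/(S:ℝ)) := by
      have h1 : ∑ k ∈ Finset.Ioc S n, triW g k ≤
          ∑ k ∈ Finset.Ioc S n, (18 + 36*(g:ℝ)*(1/(k:ℝ)) + 18*(g:ℝ)^2*(1/(k:ℝ)^2)) := by
        refine Finset.sum_le_sum fun k hk => triW_le_quad ?_
        rw [Finset.mem_Ioc] at hk
        exact le_trans hS1 hk.1.le
      rw [Finset.sum_add_distrib, Finset.sum_add_distrib] at h1
      have hc : ∑ _k ∈ Finset.Ioc S n, (18:ℝ) = 18*((n:ℝ)-(S:ℝ)) := by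
        rw [Finset.sum_const, Nat.card_Ioc, nsmul_eq_mul, Nat.cast_sub hcase]
        ring
      have hinv : ∑ k ∈ Finset.Ioc S n, 36*(g:ℝ)*(1/(k:ℝ)) ≤ 36*(g:ℝ)*Real.log n := by
        rw [← Finset.mul_sum]
        exact mul_le_mul_of_nonneg_left (sumInvTail hS1 hcase) (by positivity)
      have hinv2 : ∑ k ∈ Finset.Ioc S n, 18*(g:ℝ)^2*(1/(k:ℝ)^2) ≤ 18*(g:ℝ)^2*(1/(S:ℝ)) := by
        rw [← Finset.mul_sum]
        exact mul_le_mul_of_nonneg_left (sumInvSq hS1 hcase) (by positivity)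
      rw [hc] at h1
      linarith
    have hfrac : 18*(g:ℝ)^2*(1/(S:ℝ)) ≤ 9*t^3 := by
      have h2t0 : (0:ℝ) < 2*t := by linarith
      have : (1:ℝ)/(S:ℝ) ≤ 1/(2*t) := one_div_le_one_div_of_le h2t0 hSx
      have h1 : 18*(g:ℝ)^2*(1/(S:ℝ)) ≤ 18*t^4*(1/(2*t)) := by
        rw [hgt]
        have h4 : (t^2)^2 = t^4 := by ring
        rw [h4]
        exact mul_le_mul_of_nonneg_left this (by positivity)
      have h2 : 18*t^4*(1/(2*t)) = 9*t^3 := by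
        field_simp
        ring
      linarith
    have hScube : (S:ℝ)^3 ≤ (2*t+1)^3 := by
      exact pow_le_pow_left₀ (Nat.cast_nonneg S) hSx2 3
    rw [← hsplit, hg32]
    have hnS : (S:ℝ) ≤ (n:ℝ) := by exact_mod_cast hcase
    nlinarith [hpart1, hpart2, hfrac, hScube, ht1, hlog, hgt, hSx]

section Graph

variable {V : Type*} [Fintype V] [DecidableEq V] (G : SimpleGraph V) [DecidableRel G.Adj]

noncomputable local instance (s : Finset V) : DecidableRel (G.induce (↑s : Set V)).Adj :=
  fun a b => ‹DecidableRel G.Adj› ↑a ↑b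

lemma induced_degree_eq (s : Finset V) (x : (↑s : Set V)) :
    (G.induce (↑s : Set V)).degree x = (s.filter (G.Adj ↑x)).card := by
  rw [← card_neighborFinset_eq_degree]
  refine Finset.card_bij' (fun b _ => (b : V)) (fun u hu => ⟨u, by
    simp only [Finset.mem_filter] at hu
    exact hu.1⟩) ?_ ?_ ?_ ?_
  · intro b hb
    rw [SimpleGraph.mem_neighborFinset] at hb
    simp only [Finset.mem_filter]
    exact ⟨b.2, hb⟩
  · intro u hu
    simp only [Finset.mem_filter] at hu
    rw [SimpleGraph.mem_neighborFinset]
    exact hu.2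
  · intro b _; rfl
  · intro u _; rfl

lemma handshake_finset (s : Finset V) :
    ∑ u ∈ s, (s.filter (G.Adj u)).card = 2 * (G.induce (↑s : Set V)).edgeFinset.card := by
  have h := SimpleGraph.sum_degrees_eq_twice_card_edges (G.induce (↑s : Set V))
  rw [← h]
  rw [Finset.sum_subtype s (fun x => Iff.rfl) (fun u => (s.filter (G.Adj u)).card)]
  exact Finset.sum_congr rfl fun x _ => (induced_degree_eq G s x).symm

lemma edgecount_eq (s : Finset V) :
    (G.induce (↑s : Set V)).edgeFinset.card
      = ((⊤ : G.Subgraph).induce (↑s : Set V)).edgeSet.ncard := by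
  have h0 : (G.induce (↑s : Set V)).edgeFinset.card
      = (G.induce (↑s : Set V)).edgeSet.ncard := by
    have := Set.ncard_coe_finset (G.induce (↑s : Set V)).edgeFinset
    rw [SimpleGraph.coe_edgeFinset] at this
    exact this.symm
  have h1 : (G.induce (↑s : Set V)).edgeSet
      = ((⊤ : G.Subgraph).induce (↑s : Set V)).coe.edgeSet :=
    congrArg SimpleGraph.edgeSet (SimpleGraph.induce_eq_coe_induce_top (↑s : Set V))
  have h2 : (Sym2.map (Subtype.val : ((↑s : Set V)) → V) '' ((⊤ : G.Subgraph).induce (↑s : Set V)).coe.edgeSet).ncard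
      = ((⊤ : G.Subgraph).induce (↑s : Set V)).coe.edgeSet.ncard :=
    Set.ncard_image_of_injective _ (Sym2.map.injective Subtype.val_injective)
  have h3 := Subgraph.image_coe_edgeSet_coe ((⊤ : G.Subgraph).induce (↑s : Set V))
  rw [h0, h1]
  exact h2.symm.trans (congrArg Set.ncard h3)

lemma edges_le {g : ℕ} (hE : ∀ H : G.Subgraph, H.edgeSet.ncard ≤ 3 * (H.verts.ncard + g))
    (s : Finset V) :
    (G.induce (↑s : Set V)).edgeFinset.card ≤ 3 * (s.card + g) := by
  rw [edgecount_eq]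
  have h := hE ((⊤ : G.Subgraph).induce (↑s : Set V))
  have hv : ((⊤ : G.Subgraph).induce (↑s : Set V)).verts.ncard = s.card := by
    simp [Subgraph.induce, Set.ncard_coe_finset]
  rwa [hv] at h

end Graph

section Main

variable {V : Type*} [Fintype V] [DecidableEq V] (G : SimpleGraph V) [DecidableRel G.Adj]

lemma tri_main (g : ℕ)
    (hE : ∀ H : G.Subgraph, H.edgeSet.ncard ≤ 3 * (H.verts.ncard + g)) :
    ∀ (n : ℕ) (s : Finset V), s.card = n →
      (((G.cliqueFinset 3).filter (fun t => t ⊆ s)).card : ℝ) ≤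
        ∑ k ∈ Finset.Ioc 0 n, triW g k := by
  intro n
  induction n with
  | zero =>
    intro s hs
    rw [Finset.card_eq_zero] at hs
    subst hs
    have : ((G.cliqueFinset 3).filter (fun t => t ⊆ (∅ : Finset V))) = ∅ := by
      rw [Finset.filter_eq_empty_iff]
      intro t ht hsub
      have hcard := (SimpleGraph.mem_cliqueFinset_iff.mp ht).card_eq
      rw [Finset.subset_empty] at hsub
      subst hsub
      simp at hcard
    rw [this]
    simp
  | succ n ih =>
    intro s hs
    have hne : s.Nonempty := Finset.card_pos.mp (by omega)
    set d : V → ℕ := fun u => (s.filter (G.Adj u)).card with hd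
    obtain ⟨v, hv, hmin⟩ := s.exists_min_image d hne
    -- degree bound
    have hsum : s.card * d v ≤ ∑ u ∈ s, d u := by
      calc s.card * d v = ∑ _u ∈ s, d v := by rw [Finset.sum_const, smul_eq_mul]
        _ ≤ ∑ u ∈ s, d u := Finset.sum_le_sum fun u hu => hmin u hu
    have hdeg : (n + 1) * d v ≤ 6 * (n + 1 + g) := by
      have h1 := handshake_finset G s
      have h2 := edges_le G hE s
      rw [hs] at hsum h2
      simp only [hd] at hsum ⊢
      omega
    -- d v ≤ n
    have hdn : d v ≤ n := by
      have hsub : s.filter (G.Adj v) ⊆ s.erase v := by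
        intro u hu
        rw [Finset.mem_filter] at hu
        exact Finset.mem_erase.mpr ⟨(G.ne_of_adj hu.2).symm, hu.1⟩
      have := Finset.card_le_card hsub
      rw [Finset.card_erase_of_mem hv, hs] at this
      simpa [hd] using this
    -- split triangles by containing v or not
    set A := (G.cliqueFinset 3).filter (fun t => t ⊆ s) with hA
    have hsplit := Finset.card_filter_add_card_filter_not
      (s := A) (p := fun t => v ∈ t)
    -- triangles containing v
    have hb1 : (A.filter (fun t => v ∈ t)).card ≤ (d v).choose 2 := by
      have h := Finset.card_le_card_of_injOn (fun t : Finset V => t.erase v)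
        (s := A.filter (fun t => v ∈ t))
        (t := (s.filter (G.Adj v)).powersetCard 2) ?_ ?_
      · rwa [Finset.card_powersetCard] at h
      · intro t ht
        simp only [hA, Finset.mem_coe, Finset.mem_filter] at ht
        obtain ⟨⟨htc, hts⟩, hvt⟩ := ht
        have hcl := SimpleGraph.mem_cliqueFinset_iff.mp htc
        rw [Finset.mem_coe, Finset.mem_powersetCard]
        constructor
        · intro u hu
          rw [Finset.mem_erase] at hu
          rw [Finset.mem_filter]
          refine ⟨hts hu.2, ?_⟩
          exact hcl.isClique (by simpa using hvt) (by simpa using hu.2) (Ne.symm hu.1)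
        · rw [Finset.card_erase_of_mem hvt, hcl.card_eq]
      · intro t1 ht1 t2 ht2 hee
        simp only [hA, Finset.coe_filter, Set.mem_setOf_eq, Finset.mem_filter] at ht1 ht2
        have hee' : t1.erase v = t2.erase v := hee
        rw [← Finset.insert_erase ht1.2, ← Finset.insert_erase ht2.2, hee']
    -- triangles not containing v
    have hb2 : ((A.filter (fun t => v ∉ t)).card : ℝ) ≤ ∑ k ∈ Finset.Ioc 0 n, triW g k := by
      have hsub : A.filter (fun t => v ∉ t) ⊆
          (G.cliqueFinset 3).filter (fun t => t ⊆ s.erase v) := by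
        intro t ht
        simp only [hA, Finset.mem_filter] at ht ⊢
        exact ⟨ht.1.1, Finset.subset_erase.mpr ⟨ht.1.2, ht.2⟩⟩
      have hcard : (s.erase v).card = n := by
        rw [Finset.card_erase_of_mem hv, hs]
        omega
      calc ((A.filter (fun t => v ∉ t)).card : ℝ)
          ≤ (((G.cliqueFinset 3).filter (fun t => t ⊆ s.erase v)).card : ℝ) := by
            exact_mod_cast Finset.card_le_card hsub
        _ ≤ _ := ih (s.erase v) hcard
    -- the choose bound vs triW
    have hw : ((d v).choose 2 : ℝ) ≤ triW g (n+1) := by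
      have hc2 : ((d v).choose 2 : ℝ) = (d v : ℝ) * ((d v : ℝ) - 1) / 2 :=
        Nat.cast_choose_two (K := ℝ) (d v)
      have hd0 : (0:ℝ) ≤ (d v : ℝ) := Nat.cast_nonneg _
      have hdnR : (d v : ℝ) ≤ (n : ℝ) := by exact_mod_cast hdn
      have hnpos : (0:ℝ) < (n:ℝ) + 1 := by positivity
      refine le_min ?_ ?_
      · -- ≤ ((n+1)-1)((n+1)-2)/2
        have h2 : (d v).choose 2 ≤ n.choose 2 := Nat.choose_le_choose 2 hdn
        have h3 : ((n:ℕ).choose 2 : ℝ) = (n:ℝ) * ((n:ℝ) - 1) / 2 := Nat.cast_choose_two (K := ℝ) n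
        have h4 : ((d v).choose 2 : ℝ) ≤ (n.choose 2 : ℝ) := by exact_mod_cast h2
        rw [h3] at h4
        push_cast
        nlinarith [h4]
      · -- ≤ (6 + 6g/(n+1))^2 / 2
        have hq : (d v : ℝ) ≤ 6 + 6*(g:ℝ)/((n:ℝ)+1) := by
          have hcast : ((n:ℝ)+1) * (d v : ℝ) ≤ 6*(((n:ℝ)+1)+(g:ℝ)) := by
            exact_mod_cast hdeg
          rw [show (6:ℝ) + 6*(g:ℝ)/((n:ℝ)+1) = (6*(((n:ℝ)+1)+(g:ℝ)))/((n:ℝ)+1) by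
            field_simp]
          rw [le_div_iff₀ hnpos]
          linarith
        have hsq : (d v : ℝ)^2 ≤ (6 + 6*(g:ℝ)/((n:ℝ)+1))^2 := pow_le_pow_left₀ hd0 hq 2
        rw [hc2]
        push_cast
        nlinarith [hsq, hd0]
    -- assemble
    rw [Finset.sum_Ioc_succ_top (Nat.zero_le n)]
    have : (A.card : ℝ) = ((A.filter (fun t => v ∈ t)).card : ℝ)
        + ((A.filter (fun t => v ∉ t)).card : ℝ) := by exact_mod_cast hsplit.symm
    rw [hA] at this ⊢
    rw [this]
    have hb1R : ((A.filter (fun t => v ∈ t)).card : ℝ) ≤ ((d v).choose 2 : ℝ) := by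
      exact_mod_cast hb1
    rw [hA] at hb1R hb2
    linarith

end Main

/-- If `g ≥ 1` and every subgraph `H` of an `n`-vertex graph `G` (with `n ≥ 1`) satisfies
`|E(H)| ≤ 3(|V(H)| + g)`, then the number of triangles in `G` is at most
`(21/2)·g^{3/2} + 18n + 36g(ln n + 1)`. -/
theorem stmt6 {V : Type*} [Fintype V] [DecidableEq V]
    (G : SimpleGraph V) [DecidableRel G.Adj]
    (g : ℕ) (hg : 1 ≤ g) (hn : 1 ≤ Fintype.card V)
    (hE : ∀ H : G.Subgraph, H.edgeSet.ncard ≤ 3 * (H.verts.ncard + g)) :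
    ((G.cliqueFinset 3).card : ℝ) ≤
      (21 / 2) * (g : ℝ) ^ ((3 : ℝ) / 2) + 18 * (Fintype.card V : ℝ) +
        36 * (g : ℝ) * (Real.log (Fintype.card V) + 1) := by
  have h := tri_main G g hE (Fintype.card V) Finset.univ Finset.card_univ
  have heq : (G.cliqueFinset 3).filter (fun t => t ⊆ (Finset.univ : Finset V))
      = G.cliqueFinset 3 :=
    Finset.filter_true_of_mem fun t _ => Finset.subset_univ t
  rw [heq] at h
  exact h.trans (analytic g (Fintype.card V) hg hn)
end

section
/- Let s ≥ 5 and g ≥ 1 be integers, and let G be a graph with n vertices such that n ≤ 13g and every subgraph H of G satisfies |E(H)| ≤ 3(|V(H)| + g). Then the number of copies of K_s in G is at most (300·√g / s)^s. -/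
open SimpleGraph

open scoped FinsetFamily

attribute [-instance] instDecidableEqFin

/-- `(n+1)^n ≤ 3 * n^n`, a `ℕ` version of `(1+1/n)^n ≤ e < 3`. -/
private lemma succ_pow_le_three_mul (n : ℕ) : (n + 1) ^ n ≤ 3 * n ^ n := by
  rcases Nat.eq_zero_or_pos n with h | h
  · subst h; norm_num
  · have hn : (0:ℝ) < (n:ℝ) := by exact_mod_cast h
    have h1 : ((n:ℝ) + 1) ≤ (n:ℝ) * Real.exp (1 / (n:ℝ)) := by
      have h2 := Real.add_one_le_exp (1 / (n:ℝ))
      have h3 : (n:ℝ) * (1 / (n:ℝ) + 1) ≤ (n:ℝ) * Real.exp (1 / (n:ℝ)) :=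
        mul_le_mul_of_nonneg_left h2 hn.le
      have h4 : (n:ℝ) * (1 / (n:ℝ) + 1) = (n:ℝ) + 1 := by field_simp; ring
      linarith
    have h3 : ((n:ℝ) + 1) ^ n ≤ ((n:ℝ) * Real.exp (1 / (n:ℝ))) ^ n :=
      pow_le_pow_left₀ (by positivity) h1 n
    have h4 : ((n:ℝ) * Real.exp (1 / (n:ℝ))) ^ n = (n:ℝ) ^ n * Real.exp 1 := by
      rw [mul_pow, ← Real.exp_nat_mul]
      congr 1
      field_simp
    have h5 : Real.exp 1 ≤ 3 := (Real.exp_one_lt_d9.trans (by norm_num)).le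
    have h6 : ((n:ℝ) + 1) ^ n ≤ 3 * (n:ℝ) ^ n := by
      have hp : (0:ℝ) ≤ (n:ℝ) ^ n := by positivity
      nlinarith
    exact_mod_cast h6

/-- `n^n ≤ 3^n * n!`, a `ℕ` version of `(n/e)^n ≤ n!`. -/
private lemma pow_self_le_three_pow_mul_factorial (n : ℕ) :
    n ^ n ≤ 3 ^ n * n.factorial := by
  induction n with
  | zero => simp
  | succ n ih =>
    calc (n + 1) ^ (n + 1) = (n + 1) ^ n * (n + 1) := by ring
      _ ≤ (3 * n ^ n) * (n + 1) := Nat.mul_le_mul_right _ (succ_pow_le_three_mul n)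
      _ ≤ (3 * (3 ^ n * n.factorial)) * (n + 1) := by
          exact Nat.mul_le_mul_right _ (Nat.mul_le_mul_left _ ih)
      _ = 3 ^ (n + 1) * ((n + 1) * n.factorial) := by ring
      _ = 3 ^ (n + 1) * (n + 1).factorial := by rw [Nat.factorial_succ]

/-- If `s ≥ 5`, `g ≥ 1`, `G` has `n ≤ 13g` vertices and every subgraph `H` of `G` satisfies
`|E(H)| ≤ 3(|V(H)| + g)`, then the number of copies of `K_s` in `G` is at most
`(300√g / s)^s`. -/
theorem stmt8 {V : Type*} [Fintype V] [DecidableEq V]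
    (G : SimpleGraph V) [DecidableRel G.Adj]
    (s g : ℕ) (hs : 5 ≤ s) (hg : 1 ≤ g)
    (hn : Fintype.card V ≤ 13 * g)
    (hE : ∀ H : G.Subgraph, H.edgeSet.ncard ≤ 3 * (H.verts.ncard + g)) :
    ((G.cliqueFinset s).card : ℝ) ≤ ((300 * Real.sqrt g) / s) ^ s := by
  classical
  set t := Nat.sqrt g with htdef
  set k := max (10 * (t + 1)) s with hkdef
  -- The total number of edges of `G` is at most `42 g`.
  have hedge : G.edgeFinset.card ≤ 42 * g := by
    have h := hE ⊤
    rw [Subgraph.edgeSet_top, Subgraph.verts_top, Set.ncard_univ,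
      Nat.card_eq_fintype_card] at h
    have he : G.edgeSet.ncard = G.edgeFinset.card := by
      rw [Set.ncard_eq_toFinset_card']
      congr 1
    omega
  -- By Kruskal–Katona, the number of `s`-cliques is less than `k.choose s`.
  have hT : (G.cliqueFinset s).card < k.choose s := by
    by_contra hcon
    push_neg at hcon
    set M := Fintype.card V + k with hM
    set f : V ↪ Fin M :=
      (Fintype.equivFin V).toEmbedding.trans (Fin.castLEEmb (Nat.le_add_right _ _)) with hf
    set 𝒜 : Finset (Finset (Fin M)) := (G.cliqueFinset s).image (fun c => c.map f) with h𝒜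
    have hcard𝒜 : 𝒜.card = (G.cliqueFinset s).card :=
      Finset.card_image_of_injective _ (Finset.map_injective f)
    have h₁ : (𝒜 : Set (Finset (Fin M))).Sized s := by
      intro A hA
      simp only [h𝒜, Finset.coe_image, Set.mem_image, Finset.mem_coe] at hA
      obtain ⟨c, hc, rfl⟩ := hA
      rw [Finset.card_map]
      exact (SimpleGraph.mem_cliqueFinset_iff.1 hc).card_eq
    have h₂ : k.choose s ≤ 𝒜.card := by rw [hcard𝒜]; exact hcon
    have hkk := Finset.kruskal_katona_lovasz_form (i := s - 2)
      (Nat.sub_le s 2) (le_max_right _ s) (Nat.le_add_left k _) h₁ h₂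
    have hs2 : s - (s - 2) = 2 := by omega
    rw [hs2] at hkk
    -- every iterated shadow element is an edge of `G` (transported along `f`)
    have hsurj : Set.SurjOn
        (fun e : Sym2 V => Sym2.lift
          ⟨fun a b => ({f a, f b} : Finset (Fin M)),
            fun a b => Finset.pair_comm (f a) (f b)⟩ e)
        (G.edgeFinset : Set (Sym2 V)) ((∂^[s-2] 𝒜 : Finset (Finset (Fin M))) :
          Set (Finset (Fin M))) := by
      intro B hB
      rw [Finset.mem_coe, Finset.mem_shadow_iterate_iff_exists_sdiff] at hB
      obtain ⟨A, hA, hBA, hcardAB⟩ := hB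
      simp only [h𝒜, Finset.mem_image] at hA
      obtain ⟨c, hc, rfl⟩ := hA
      have hcclique := SimpleGraph.mem_cliqueFinset_iff.1 hc
      have hcardA : (c.map f).card = s := by
        rw [Finset.card_map]; exact hcclique.card_eq
      have hBcard : B.card = 2 := by
        have h1 := Finset.card_sdiff_of_subset hBA
        have h2 := Finset.card_le_card hBA
        omega
      obtain ⟨x, y, hxy, rfl⟩ := Finset.card_eq_two.1 hBcard
      have hx : x ∈ c.map f := hBA (by simp)
      have hy : y ∈ c.map f := hBA (by simp)
      obtain ⟨a, ha, rfl⟩ := Finset.mem_map.1 hx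
      obtain ⟨b, hb, rfl⟩ := Finset.mem_map.1 hy
      have hab : a ≠ b := by rintro rfl; exact hxy rfl
      have hadj : G.Adj a b := hcclique.isClique ha hb hab
      refine ⟨s(a, b), ?_, ?_⟩
      · rw [Finset.mem_coe, SimpleGraph.mem_edgeFinset]; exact hadj
      · simp
    have hshadow : (∂^[s-2] 𝒜).card ≤ G.edgeFinset.card :=
      Finset.card_le_card_of_surjOn _ hsurj
    have hcombined : k.choose 2 ≤ 42 * g :=
      le_trans hkk (le_trans hshadow hedge)
    have hmono : (10 * (t + 1)).choose 2 ≤ k.choose 2 :=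
      Nat.choose_le_choose 2 (le_max_left _ _)
    -- `2 * C(10(t+1), 2) = 10(t+1) * (10(t+1)-1) ≥ 90 (t+1)^2`
    have hdf : (10 * (t + 1)).descFactorial 2 = 2 * (10 * (t + 1)).choose 2 := by
      rw [Nat.descFactorial_eq_factorial_mul_choose]
      norm_num [Nat.factorial]
    have hdf2 : (10 * (t + 1)).descFactorial 2 = (10 * (t + 1)) * (10 * (t + 1) - 1) := by
      rw [Nat.descFactorial_succ, Nat.descFactorial_one]
      exact Nat.mul_comm _ _
    have h9 : (10 * (t + 1)) * (9 * (t + 1)) ≤ (10 * (t + 1)) * (10 * (t + 1) - 1) :=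
      Nat.mul_le_mul_left _ (by omega)
    have hgu : g < (t + 1) * (t + 1) := by
      simpa [Nat.succ_eq_add_one] using Nat.lt_succ_sqrt g
    nlinarith [hcombined, hmono, hdf, hdf2, h9, hgu]
  -- Now turn the binomial bound into the stated real bound.
  by_cases hcase : s ≤ 10 * (t + 1)
  · have hk' : k = 10 * (t + 1) := max_eq_left hcase
    have hnat : k.choose s * s ^ s ≤ (3 * k) ^ s := by
      calc k.choose s * s ^ s
          ≤ k.choose s * (3 ^ s * s.factorial) :=
            Nat.mul_le_mul_left _ (pow_self_le_three_pow_mul_factorial s)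
        _ = 3 ^ s * (s.factorial * k.choose s) := by ring
        _ = 3 ^ s * k.descFactorial s := by rw [Nat.descFactorial_eq_factorial_mul_choose]
        _ ≤ 3 ^ s * k ^ s := Nat.mul_le_mul_left _ (Nat.descFactorial_le_pow _ _)
        _ = (3 * k) ^ s := (mul_pow _ _ _).symm
    have hspos : (0:ℝ) < (s:ℝ) := by
      have : (0:ℕ) < s := by omega
      exact_mod_cast this
    have ht_le : (t:ℝ) ≤ Real.sqrt g := by
      rw [Real.le_sqrt (by positivity) (by positivity)]
      exact_mod_cast Nat.sqrt_le' g
    have hsq1 : (1:ℝ) ≤ Real.sqrt g := by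
      rw [show (1:ℝ) = Real.sqrt 1 by simp]
      exact Real.sqrt_le_sqrt (by exact_mod_cast hg)
    have h3k : ((3 * k : ℕ) : ℝ) ≤ 300 * Real.sqrt g := by
      rw [hk']
      push_cast
      nlinarith
    have hreal : ((G.cliqueFinset s).card : ℝ) * (s:ℝ) ^ s ≤ (300 * Real.sqrt g) ^ s := by
      have h1 : ((G.cliqueFinset s).card : ℝ) * (s:ℝ) ^ s ≤ ((3 * k : ℕ) : ℝ) ^ s := by
        have : ((G.cliqueFinset s).card * s ^ s : ℕ) ≤ ((3 * k) ^ s : ℕ) :=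
          le_trans (Nat.mul_le_mul_right _ hT.le) hnat
        exact_mod_cast this
      have h2 : ((3 * k : ℕ) : ℝ) ^ s ≤ (300 * Real.sqrt g) ^ s :=
        pow_le_pow_left₀ (by positivity) h3k s
      linarith
    rw [div_pow, le_div_iff₀ (by positivity)]
    exact hreal
  · have hk' : k = s := max_eq_right (by omega)
    rw [hk', Nat.choose_self] at hT
    have hzero : (G.cliqueFinset s).card = 0 := by omega
    rw [hzero, Nat.cast_zero]
    positivity
end

section
/- Let T be a tree, let I be a stable set of vertices of T each of degree at most 2 in T, and let q ≥ 1 be an integer. Let G be the graph with vertex set (V(T) \ I) ⊔ (I × {1, …, q}) in which: two vertices u, w ∈ V(T) \ I are adjacent if and only if uw ∈ E(T); a vertex u ∈ V(T) \ I and a vertex (v, j) ∈ I × {1, …, q} are adjacent if and only if uv ∈ E(T); and no two vertices of I × {1, …, q} are adjacent. Then |V(G)| = |V(T)| + (q − 1)|I| and G contains at least q^{|I|} distinct subgraphs isomorphic to T. -/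
open SimpleGraph

/-- The image of a graph embedding, as a subgraph, is isomorphic to the source graph. -/
noncomputable def embIso {α β : Type*} {A : SimpleGraph α} {B : SimpleGraph β}
    (f : A ↪g B) : (SimpleGraph.Subgraph.map f.toHom (⊤ : A.Subgraph)).coe ≃g A where
  toEquiv := ((Equiv.setCongr (by simp [Subgraph.map_verts, Set.image_univ] :
      (SimpleGraph.Subgraph.map f.toHom (⊤ : A.Subgraph)).verts = Set.range f))).trans
      (Equiv.ofInjective f f.injective).symm
  map_rel_iff' := by
    rintro ⟨a, ha⟩ ⟨b, hb⟩
    simp only [Equiv.trans_apply, Equiv.setCongr_apply, Subgraph.coe_adj, Subgraph.map_adj,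
      Relation.Map]
    constructor
    · intro h
      refine ⟨(Equiv.ofInjective f f.injective).symm ⟨a, ?_⟩,
        (Equiv.ofInjective f f.injective).symm ⟨b, ?_⟩, ?_, ?_, ?_⟩
      · simpa [Set.image_univ] using ha
      · simpa [Set.image_univ] using hb
      · simpa using h
      · exact Equiv.apply_ofInjective_symm f.injective _
      · exact Equiv.apply_ofInjective_symm f.injective _
    · rintro ⟨x, y, hxy, hx, hy⟩
      have hx' : f x = a := hx
      have hy' : f y = b := hy
      have : x = (Equiv.ofInjective f f.injective).symm ⟨a, by simpa [Set.image_univ] using ha⟩ := by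
        apply f.injective; rw [hx']
        exact (Equiv.apply_ofInjective_symm f.injective
          ⟨a, by simpa [Set.image_univ] using ha⟩).symm
      have that : y = (Equiv.ofInjective f f.injective).symm ⟨b, by simpa [Set.image_univ] using hb⟩ := by
        apply f.injective; rw [hy']
        exact (Equiv.apply_ofInjective_symm f.injective
          ⟨b, by simpa [Set.image_univ] using hb⟩).symm
      rw [this, that] at hxy
      simpa using hxy

/-- Blow-up construction: let `T` be a tree, `I` a stable set of vertices of degree at most 2,
and `q ≥ 1`. Let `G` be the graph on `(V(T) \ I) ⊔ (I × {1,…,q})` in which two old vertices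
are adjacent iff they are adjacent in `T`, an old vertex `u` and a clone `(v, j)` are adjacent
iff `uv ∈ E(T)`, and no two clones are adjacent. Then `|V(G)| = |V(T)| + (q−1)|I|` and `G`
contains at least `q^{|I|}` distinct subgraphs isomorphic to `T`. -/
theorem stmt10 {V : Type*} [Fintype V] (T : SimpleGraph V) (hT : T.IsTree)
    (I : Set V)
    (hdeg : ∀ v ∈ I, (T.neighborSet v).ncard ≤ 2)
    (hstab : ∀ u ∈ I, ∀ w ∈ I, ¬ T.Adj u w)
    (q : ℕ) (hq : 1 ≤ q)
    (G : SimpleGraph ((↥(Iᶜ)) ⊕ (↥I × Fin q)))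
    (hG1 : ∀ u w : ↥(Iᶜ), G.Adj (Sum.inl u) (Sum.inl w) ↔ T.Adj ↑u ↑w)
    (hG2 : ∀ u : ↥(Iᶜ), ∀ p : ↥I × Fin q,
      G.Adj (Sum.inl u) (Sum.inr p) ↔ T.Adj ↑u ↑p.1)
    (hG3 : ∀ p p' : ↥I × Fin q, ¬ G.Adj (Sum.inr p) (Sum.inr p')) :
    Nat.card ((↥(Iᶜ)) ⊕ (↥I × Fin q)) = Fintype.card V + (q - 1) * I.ncard ∧
      q ^ I.ncard ≤ Nat.card {G' : G.Subgraph // Nonempty (G'.coe ≃g T)} := by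
  classical
  have hIfin : I.Finite := Set.toFinite I
  have hIc : Iᶜ.ncard + I.ncard = Fintype.card V := by
    rw [← Nat.card_eq_fintype_card, ← Set.ncard_add_ncard_compl I, add_comm]
  constructor
  · rw [Nat.card_sum, Nat.card_prod, Nat.card_eq_fintype_card (α := Fin q), Fintype.card_fin,
      Nat.card_coe_set_eq, Nat.card_coe_set_eq]
    obtain ⟨k, rfl⟩ := Nat.exists_eq_add_of_le hq
    rw [Nat.add_sub_cancel_left, Nat.mul_add, Nat.mul_one, Nat.mul_comm I.ncard k]
    omega
  · -- For each f : ↥I → Fin q, build an embedding of T into G.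
    set φ : (↥I → Fin q) → V → ((↥(Iᶜ)) ⊕ (↥I × Fin q)) := fun f v =>
      if h : v ∈ I then Sum.inr (⟨v, h⟩, f ⟨v, h⟩) else Sum.inl ⟨v, h⟩ with hφ
    have φinj : ∀ f, Function.Injective (φ f) := by
      intro f a b hab
      by_cases ha : a ∈ I <;> by_cases hb : b ∈ I <;>
        simp [hφ, ha, hb] at hab <;> tauto
    have φadj : ∀ f, ∀ a b : V, G.Adj (φ f a) (φ f b) ↔ T.Adj a b := by
      intro f a b
      simp only [hφ]
      by_cases ha : a ∈ I <;> by_cases hb : b ∈ I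
      · rw [dif_pos ha, dif_pos hb]
        exact iff_of_false (hG3 _ _) (hstab a ha b hb)
      · rw [dif_pos ha, dif_neg hb, G.adj_comm]
        exact (hG2 ⟨b, hb⟩ (⟨a, ha⟩, f ⟨a, ha⟩)).trans (T.adj_comm b a)
      · rw [dif_neg ha, dif_pos hb]
        exact hG2 ⟨a, ha⟩ (⟨b, hb⟩, f ⟨b, hb⟩)
      · rw [dif_neg ha, dif_neg hb]
        exact hG1 ⟨a, ha⟩ ⟨b, hb⟩
    set emb : (↥I → Fin q) → (T ↪g G) := fun f =>
      ⟨⟨φ f, φinj f⟩, fun {a b} => φadj f a b⟩ with hemb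
    set F : (↥I → Fin q) → {G' : G.Subgraph // Nonempty (G'.coe ≃g T)} := fun f =>
      ⟨SimpleGraph.Subgraph.map (emb f).toHom ⊤, ⟨embIso (emb f)⟩⟩ with hF
    have Finj : Function.Injective F := by
      intro f g hfg
      funext v
      by_contra hne
      have hmem : Sum.inr ((v : ↥I), f v) ∈ (SimpleGraph.Subgraph.map (emb f).toHom ⊤).verts := by
        simp only [Subgraph.map_verts, Subgraph.verts_top, Set.image_univ]
        exact ⟨(v : V), by simp [hemb, hφ, v.2]⟩
      rw [show (SimpleGraph.Subgraph.map (emb f).toHom ⊤) = (F f).1 from rfl, hfg] at hmem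
      simp only [hF, Subgraph.map_verts, Subgraph.verts_top, Set.image_univ] at hmem
      obtain ⟨w, hw⟩ := hmem
      have hw' : φ g w = Sum.inr ((v : ↥I), f v) := hw
      simp only [hφ] at hw'
      by_cases hwI : w ∈ I
      · rw [dif_pos hwI, Sum.inr.injEq, Prod.mk.injEq] at hw'
        obtain ⟨h1, h2⟩ := hw'
        rw [h1] at h2
        exact hne h2.symm
      · rw [dif_neg hwI] at hw'
        simp at hw'
    have hfinSub : Finite G.Subgraph := by
      refine Finite.of_injective (fun S => (S.verts, S.Adj)) ?_
      intro S1 S2 h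
      exact Subgraph.ext (congrArg Prod.fst h) (congrArg Prod.snd h)
    have hcard : Nat.card (↥I → Fin q) = q ^ I.ncard := by
      have : Fintype ↥I := hIfin.fintype
      rw [Nat.card_eq_fintype_card, Fintype.card_fun, Fintype.card_fin,
        ← Nat.card_coe_set_eq, Nat.card_eq_fintype_card]
    calc q ^ I.ncard = Nat.card (↥I → Fin q) := hcard.symm
      _ ≤ Nat.card {G' : G.Subgraph // Nonempty (G'.coe ≃g T)} :=
        Nat.card_le_card_of_injective F Finj
end

section
/- Let H be a graph, let (A₁,B₁), …, (A_k,B_k) be pairwise independent (≤2)-separations of H, and let q ≥ 1 be an integer. Let G be the graph with vertex set V(H) ⊔ (⨆_{i=1}^{k} {1, …, q−1} × (V(Aᵢ) \ V(Bᵢ))) and with the following edges: all edges of H; for each i ∈ {1,…,k} and j ∈ {1,…,q−1}, an edge between (j,x) and (j,y) whenever x, y ∈ V(Aᵢ) \ V(Bᵢ) and xy ∈ E(Aᵢ); and an edge between (j,x) and z whenever x ∈ V(Aᵢ) \ V(Bᵢ), z ∈ V(Aᵢ) ∩ V(Bᵢ), and xz ∈ E(Aᵢ). Then |V(G)| ≤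 q·|V(H)| and G contains at least q^k distinct subgraphs isomorphic to H. -/
open SimpleGraph

section PasteAux

variable {V : Type*} {k q : ℕ}

/-- The embedding of `V(H)` into the pasted vertex set determined by a choice
function `g` (none = original copy, some j = clone j). -/
noncomputable def pastePhi (S : Fin k → Set V) (g : Fin k → Option (Fin (q - 1))) (v : V) :
    V ⊕ (Σ i : Fin k, Fin (q - 1) × ↥(S i)) :=
  letI := Classical.propDecidable
  if h : ∃ (i : Fin k) (j : Fin (q - 1)), v ∈ S i ∧ g i = some j then
    Sum.inr ⟨h.choose, h.choose_spec.choose, ⟨v, h.choose_spec.choose_spec.1⟩⟩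
  else Sum.inl v

lemma pastePhi_inl {S : Fin k → Set V} {g : Fin k → Option (Fin (q - 1))} {v : V}
    (h : ¬ ∃ (i : Fin k) (j : Fin (q - 1)), v ∈ S i ∧ g i = some j) :
    pastePhi S g v = Sum.inl v := dif_neg h

lemma pastePhi_inl_inj {S : Fin k → Set V} {g : Fin k → Option (Fin (q - 1))} {v u : V}
    (h : pastePhi S g v = Sum.inl u) : v = u := by
  unfold pastePhi at h
  split_ifs at h with hc
  exact Sum.inl_injective h

lemma pastePhi_inr_spec {S : Fin k → Set V} {g : Fin k → Option (Fin (q - 1))} {v : V}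
    {i : Fin k} {j : Fin (q - 1)} {x : ↥(S i)}
    (h : pastePhi S g v = Sum.inr ⟨i, j, x⟩) : (x : V) = v ∧ v ∈ S i ∧ g i = some j := by
  unfold pastePhi at h
  split_ifs at h with hc
  · have hv0 := hc.choose_spec.choose_spec.1
    have hg0 := hc.choose_spec.choose_spec.2
    have h' := Sum.inr_injective h
    obtain ⟨h1, h2⟩ := Sigma.mk.inj_iff.mp h'
    subst h1
    have h3 := eq_of_heq h2
    have h4 : hc.choose_spec.choose = j := congrArg Prod.fst h3
    have h5 : (⟨v, hv0⟩ : ↥(S hc.choose)) = x := congrArg Prod.snd h3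
    exact ⟨by rw [← h5], hv0, by rw [← h4]; exact hg0⟩

lemma pastePhi_mem {S : Fin k → Set V} {g : Fin k → Option (Fin (q - 1))}
    (hdisj : ∀ i i', i ≠ i' → S i ∩ S i' = ∅) {v : V} {i : Fin k} {j : Fin (q - 1)}
    (hv : v ∈ S i) (hg : g i = some j) :
    pastePhi S g v = Sum.inr ⟨i, j, ⟨v, hv⟩⟩ := by
  have hc : ∃ (i : Fin k) (j : Fin (q - 1)), v ∈ S i ∧ g i = some j := ⟨i, j, hv, hg⟩
  unfold pastePhi
  rw [dif_pos hc]
  have hv0 := hc.choose_spec.choose_spec.1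
  have hg0 := hc.choose_spec.choose_spec.2
  have h1 : hc.choose = i := by
    by_contra hne
    have hd := hdisj _ _ hne
    have : v ∈ S hc.choose ∩ S i := ⟨hv0, hv⟩
    rw [hd] at this
    exact this
  subst h1
  have h2 : hc.choose_spec.choose = j := by
    rw [hg0] at hg
    exact Option.some.inj hg
  subst h2
  rfl

lemma pastePhi_inj {S : Fin k → Set V} {g : Fin k → Option (Fin (q - 1))} :
    Function.Injective (pastePhi S g) := by
  intro u v h
  rcases h1 : pastePhi S g u with a | ⟨i, j, x⟩
  · have h2 : pastePhi S g v = Sum.inl a := by rw [← h, h1]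
    rw [pastePhi_inl_inj h1, pastePhi_inl_inj h2]
  · have h2 : pastePhi S g v = Sum.inr ⟨i, j, x⟩ := by rw [← h, h1]
    rw [← (pastePhi_inr_spec h1).1, (pastePhi_inr_spec h2).1]

/-- The image subgraph of `H` under a graph homomorphism-like map `φ`. -/
def pastedSubgraph {W V : Type*} (G : SimpleGraph W) (H : SimpleGraph V) (φ : V → W)
    (hom : ∀ u v, H.Adj u v → G.Adj (φ u) (φ v)) : G.Subgraph where
  verts := Set.range φ
  Adj a b := ∃ u v, H.Adj u v ∧ φ u = a ∧ φ v = b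
  adj_sub := by rintro a b ⟨u, v, h, rfl, rfl⟩; exact hom u v h
  edge_vert := by rintro a b ⟨u, v, h, rfl, rfl⟩; exact ⟨u, rfl⟩
  symm := ⟨by rintro a b ⟨u, v, h, rfl, rfl⟩; exact ⟨v, u, h.symm, rfl, rfl⟩⟩

lemma pastedSubgraph_iso {W V : Type*} (G : SimpleGraph W) (H : SimpleGraph V) (φ : V → W)
    (hom : ∀ u v, H.Adj u v → G.Adj (φ u) (φ v)) (hinj : Function.Injective φ) :
    Nonempty ((pastedSubgraph G H φ hom).coe ≃g H) := by
  have e : H ≃g (pastedSubgraph G H φ hom).coe := by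
    refine ⟨Equiv.ofInjective φ hinj, ?_⟩
    intro a b
    show (pastedSubgraph G H φ hom).Adj ((Equiv.ofInjective φ hinj) a) ((Equiv.ofInjective φ hinj) b) ↔ H.Adj a b
    show (∃ u v, H.Adj u v ∧ φ u = φ a ∧ φ v = φ b) ↔ H.Adj a b
    constructor
    · rintro ⟨u, v, h, hu, hv⟩
      obtain rfl := hinj hu
      obtain rfl := hinj hv
      exact h
    · intro h
      exact ⟨a, b, h, rfl, rfl⟩
  exact ⟨e.symm⟩

end PasteAux

/-- Pasting construction: let `(A₁,B₁), …, (A_k,B_k)` be pairwise independent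
`(≤2)`-separations of `H` and `q ≥ 1`. Let `G` be the graph on
`V(H) ⊔ (⨆ᵢ {1,…,q−1} × (V(Aᵢ) \ V(Bᵢ)))` with the edges of `H`, the edges of `Aᵢ` inside
each clone of `V(Aᵢ) \ V(Bᵢ)`, and the edges of `Aᵢ` from each clone to `V(Aᵢ) ∩ V(Bᵢ)`.
Then `|V(G)| ≤ q|V(H)|` and `G` contains at least `q^k` distinct subgraphs isomorphic
to `H`. -/
theorem stmt11 {V : Type*} [Fintype V] (H : SimpleGraph V)
    (k : ℕ) (A B : Fin k → H.Subgraph)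
    (hsep : ∀ i, IsSepLE2 H (A i) (B i))
    (hind : ∀ i j, i ≠ j → IndepSeps (A i) (B i) (A j) (B j))
    (q : ℕ) (hq : 1 ≤ q)
    (G : SimpleGraph (V ⊕ (Σ i : Fin k, Fin (q - 1) × ↥((A i).verts \ (B i).verts))))
    (hG1 : ∀ z z' : V, G.Adj (Sum.inl z) (Sum.inl z') ↔ H.Adj z z')
    (hG2 : ∀ i : Fin k, ∀ j j' : Fin (q - 1),
      ∀ x y : ↥((A i).verts \ (B i).verts),
      G.Adj (Sum.inr ⟨i, j, x⟩) (Sum.inr ⟨i, j', y⟩) ↔ (j = j' ∧ (A i).Adj ↑x ↑y))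
    (hG3 : ∀ i i' : Fin k, i ≠ i' → ∀ j j' : Fin (q - 1),
      ∀ x : ↥((A i).verts \ (B i).verts), ∀ y : ↥((A i').verts \ (B i').verts),
      ¬ G.Adj (Sum.inr ⟨i, j, x⟩) (Sum.inr ⟨i', j', y⟩))
    (hG4 : ∀ z : V, ∀ i : Fin k, ∀ j : Fin (q - 1),
      ∀ x : ↥((A i).verts \ (B i).verts),
      G.Adj (Sum.inl z) (Sum.inr ⟨i, j, x⟩) ↔
        (z ∈ (A i).verts ∩ (B i).verts ∧ (A i).Adj ↑x z)) :
    Nat.card (V ⊕ (Σ i : Fin k, Fin (q - 1) × ↥((A i).verts \ (B i).verts))) ≤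
        q * Fintype.card V ∧
      q ^ k ≤ Nat.card {G' : G.Subgraph // Nonempty (G'.coe ≃g H)} := by
  classical
  set S : Fin k → Set V := fun i => (A i).verts \ (B i).verts with hS
  have hdisj : ∀ i i', i ≠ i' → S i ∩ S i' = ∅ := fun i i' h => (hind i i' h).2
  have hSne : ∀ i, (S i).Nonempty := by
    intro i
    obtain ⟨k', _, _, _, hne, _⟩ := hsep i
    exact hne
  have hAadj : ∀ i u v, u ∈ S i → H.Adj u v → (A i).Adj u v := by
    intro i u v hu h
    obtain ⟨k', _, _, hsup, _⟩ := hsep i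
    have ht : ((A i) ⊔ (B i)).Adj u v := by rw [hsup]; exact Subgraph.top_adj.mpr h
    rcases Subgraph.sup_adj.mp ht with h' | h'
    · exact h'
    · exact absurd h'.fst_mem hu.2
  have hcross : ∀ i i', i ≠ i' → ∀ u v, u ∈ S i → v ∈ S i' → ¬ H.Adj u v := by
    intro i i' hne u v hu hv h
    have h1 : (A i).Adj u v := hAadj i u v hu h
    have h2 : (A i').Adj u v := (hAadj i' v u hv h.symm).symm
    have e1 : s(u, v) ∈ sepMinusEdges (A i) (B i) :=
      ⟨Subgraph.mem_edgeSet.mpr h1, fun hall => hu.2 (hall u (Sym2.mem_mk_left u v)).2⟩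
    have e2 : s(u, v) ∈ sepMinusEdges (A i') (B i') :=
      ⟨Subgraph.mem_edgeSet.mpr h2, fun hall => hv.2 (hall v (Sym2.mem_mk_right u v)).2⟩
    have h3 := (hind i i' hne).1
    have hm : s(u, v) ∈ sepMinusEdges (A i) (B i) ∩ sepMinusEdges (A i') (B i') := ⟨e1, e2⟩
    rw [h3] at hm
    exact hm
  have hom : ∀ g : Fin k → Option (Fin (q - 1)), ∀ u v : V, H.Adj u v →
      G.Adj (pastePhi S g u) (pastePhi S g v) := by
    intro g u v h
    by_cases hu : ∃ (i : Fin k) (j : Fin (q - 1)), u ∈ S i ∧ g i = some j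
    · obtain ⟨i, j, hui, hgi⟩ := hu
      rw [pastePhi_mem hdisj hui hgi]
      by_cases hv : ∃ (i' : Fin k) (j' : Fin (q - 1)), v ∈ S i' ∧ g i' = some j'
      · obtain ⟨i', j', hvi, hgi'⟩ := hv
        rw [pastePhi_mem hdisj hvi hgi']
        by_cases hii : i = i'
        · subst hii
          have hj : j = j' := by rw [hgi] at hgi'; exact Option.some.inj hgi'
          subst hj
          exact (hG2 i j j ⟨u, hui⟩ ⟨v, hvi⟩).mpr ⟨rfl, hAadj i u v hui h⟩
        · exact absurd h (hcross i i' hii u v hui hvi)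
      · rw [pastePhi_inl hv]
        have hAuv := hAadj i u v hui h
        have hvA : v ∈ (A i).verts := hAuv.snd_mem
        have hvB : v ∈ (B i).verts := by
          by_contra hvB
          exact hv ⟨i, j, ⟨hvA, hvB⟩, hgi⟩
        exact ((hG4 v i j ⟨u, hui⟩).mpr ⟨⟨hvA, hvB⟩, hAuv⟩).symm
    · rw [pastePhi_inl hu]
      by_cases hv : ∃ (i : Fin k) (j : Fin (q - 1)), v ∈ S i ∧ g i = some j
      · obtain ⟨i, j, hvi, hgi⟩ := hv
        rw [pastePhi_mem hdisj hvi hgi]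
        have hAvu := hAadj i v u hvi h.symm
        have huA : u ∈ (A i).verts := hAvu.snd_mem
        have huB : u ∈ (B i).verts := by
          by_contra huB
          exact hu ⟨i, j, ⟨huA, huB⟩, hgi⟩
        exact (hG4 u i j ⟨v, hvi⟩).mpr ⟨⟨huA, huB⟩, hAvu⟩
      · rw [pastePhi_inl hv]
        exact (hG1 u v).mpr h
  have hSubFin : Finite G.Subgraph := by
    have hfin : Finite ((V ⊕ (Σ i : Fin k, Fin (q - 1) × ↥(S i))) ×
        (V ⊕ (Σ i : Fin k, Fin (q - 1) × ↥(S i)))) := inferInstance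
    refine Finite.of_injective
      (fun G' : G.Subgraph =>
        ((G'.verts, {p : (V ⊕ (Σ i : Fin k, Fin (q - 1) × ↥(S i))) ×
            (V ⊕ (Σ i : Fin k, Fin (q - 1) × ↥(S i))) | G'.Adj p.1 p.2}) :
          Set _ × Set _)) ?_
    intro a b hab
    apply Subgraph.ext (congrArg Prod.fst hab)
    funext u v
    exact propext (Set.ext_iff.mp (congrArg Prod.snd hab) (u, v))
  constructor
  · -- cardinality bound
    have hinj2 : Function.Injective
        (fun p : (Σ i : Fin k, Fin (q - 1) × ↥(S i)) =>
          ((p.2.1, (p.2.2 : V)) : Fin (q - 1) × V)) := by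
      rintro ⟨i, j, x⟩ ⟨i', j', x'⟩ hp
      simp only [Prod.mk.injEq] at hp
      obtain ⟨hj, hx⟩ := hp
      have hii : i = i' := by
        by_contra hne
        have hd := hdisj i i' hne
        have hm : (x : V) ∈ S i ∩ S i' := ⟨x.2, by rw [hx]; exact x'.2⟩
        rw [hd] at hm
        exact hm
      subst hii
      subst hj
      obtain rfl := Subtype.ext hx
      rfl
    have h2 : Nat.card (Σ i : Fin k, Fin (q - 1) × ↥(S i)) ≤ Nat.card (Fin (q - 1) × V) :=
      Nat.card_le_card_of_injective _ hinj2
    have h3 : Nat.card (Fin (q - 1) × V) = (q - 1) * Nat.card V := by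
      rw [Nat.card_prod, Nat.card_eq_fintype_card (α := Fin (q - 1)), Fintype.card_fin]
    rw [h3] at h2
    have h4 : Nat.card (V ⊕ (Σ i : Fin k, Fin (q - 1) × ↥(S i))) =
        Nat.card V + Nat.card (Σ i : Fin k, Fin (q - 1) × ↥(S i)) := Nat.card_sum
    calc Nat.card (V ⊕ (Σ i : Fin k, Fin (q - 1) × ↥(S i)))
        = Nat.card V + Nat.card (Σ i : Fin k, Fin (q - 1) × ↥(S i)) := h4
      _ ≤ Nat.card V + (q - 1) * Nat.card V := by omega
      _ = (1 + (q - 1)) * Nat.card V := by ring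
      _ = q * Nat.card V := by congr 1; omega
      _ = q * Fintype.card V := by rw [Nat.card_eq_fintype_card]
  · -- counting copies
    have hkey : ∀ (g g' : Fin k → Option (Fin (q - 1))) (i : Fin k) (j : Fin (q - 1)),
        Set.range (pastePhi S g) = Set.range (pastePhi S g') →
        g i = some j → g' i = some j := by
      intro g g' i j hr hg
      obtain ⟨x, hx⟩ := hSne i
      have h1 : pastePhi S g x = Sum.inr ⟨i, j, ⟨x, hx⟩⟩ := pastePhi_mem hdisj hx hg
      have h2 : Sum.inr (⟨i, j, ⟨x, hx⟩⟩ : Σ i : Fin k, Fin (q - 1) × ↥(S i)) ∈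
          Set.range (pastePhi S g') := by
        rw [← hr]
        exact ⟨x, h1⟩
      obtain ⟨u, hu⟩ := h2
      exact (pastePhi_inr_spec hu).2.2
    set Φ : (Fin k → Option (Fin (q - 1))) → {G' : G.Subgraph // Nonempty (G'.coe ≃g H)} :=
      fun g => ⟨pastedSubgraph G H (pastePhi S g) (hom g),
        pastedSubgraph_iso G H (pastePhi S g) (hom g) pastePhi_inj⟩ with hΦ
    have ΦInj : Function.Injective Φ := by
      intro g g' h
      have hr : Set.range (pastePhi S g) = Set.range (pastePhi S g') :=
        congrArg Subgraph.verts (congrArg Subtype.val h)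
      funext i
      cases hgi : g i with
      | none =>
        cases hgi' : g' i with
        | none => rfl
        | some j => exact absurd (hkey g' g i j hr.symm hgi') (by rw [hgi]; simp)
      | some j => exact (hkey g g' i j hr hgi).symm
    have hcardF : Nat.card (Fin k → Option (Fin (q - 1))) = q ^ k := by
      have h5 : Nat.card (Fin k → Option (Fin (q - 1))) = (q - 1 + 1) ^ k := by
        simp [Nat.card_eq_fintype_card, Fintype.card_fun, Fintype.card_option, Fintype.card_fin]
      rw [h5, Nat.sub_add_cancel hq]
    calc q ^ k = Nat.card (Fin k → Option (Fin (q - 1))) := hcardF.symm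
      _ ≤ Nat.card {G' : G.Subgraph // Nonempty (G'.coe ≃g H)} :=
          Nat.card_le_card_of_injective Φ ΦInj
end
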